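/- arXiv:1704.06152 — 4 statements merged into one kernel-verified Lean document; each statement's English description precedes it below -/
import Mathlib

section
/- Let A and B be pointed pseudocompact k-algebras whose radical quotients A/J(A) and B/J(B) are finite dimensional, and let α : A → B be a continuous unital algebra homomorphism. Then α respects primitive idempotents (i.e., α(e) is a primitive idempotent of B whenever e is a primitive idempotent of A) if and only if the induced algebra homomorphism A/J(A) → B/J(B) is surjective. -/
open Filter Topology Function
set_option linter.unusedSectionVars false
set_option maxHeartbeats 1000000


/-! Throughout, `k` is a perfect field regarded as a discrete topological ring.

A *pseudocompact* `k`-algebra is an associative unital Hausdorff topological `k`-algebra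
which has a basis of neighbourhoods of `0` consisting of open two-sided ideals of finite
codimension intersecting in `0`, and which is the inverse limit of its quotients by these
ideals; equivalently (as encoded below) it is a complete Hausdorff topological algebra with
such a basis of open ideals. -/

/-- The Jacobson radical of a topological algebra: the intersection of the open maximal
left ideals. -/
def openJacobson (A : Type) [Ring A] [TopologicalSpace A] : Ideal A :=
  sInf {I : Ideal A | IsOpen (I : Set A) ∧ I.IsMaximal}

/-- The Jacobson radical `J(A)`, viewed as a `k`-submodule of `A`. -/
def Jrad (k : Type) [Field k] (A : Type) [Ring A] [Algebra k A] [TopologicalSpace A] :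
    Submodule k A := (openJacobson A).restrictScalars k

/-- Powers of the radical: `J⁰(A) = A`, `J¹(A) = J(A)`, `Jⁿ(A) = J(A)·Jⁿ⁻¹(A)` for `n > 1`
(the product of two `k`-submodules being spanned by the products of their elements). -/
def Jpow (k : Type) [Field k] (A : Type) [Ring A] [Algebra k A] [TopologicalSpace A] :
    ℕ → Submodule k A
  | 0 => ⊤
  | 1 => Jrad k A
  | n + 2 => Jrad k A * Jpow k A (n + 1)

/-- `A` is a pseudocompact `k`-algebra: Hausdorff, complete, with a basis of neighbourhoods
of `0` consisting of open two-sided ideals of finite codimension over `k`.  (Hausdorffness is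
equivalent to the requirement that these open ideals intersect in `0`, and completeness to
`A` being the inverse limit of its quotients by them.) -/
structure IsPseudocompactAlgebra (k : Type) [Field k] (A : Type) [Ring A] [Algebra k A]
    [UniformSpace A] [IsUniformAddGroup A] [IsTopologicalRing A] : Prop where
  t2 : T2Space A
  complete : CompleteSpace A
  basis : ∀ s ∈ nhds (0 : A), ∃ I : Ideal A,
    (∀ x ∈ I, ∀ b : A, x * b ∈ I) ∧ IsOpen (I : Set A) ∧
    FiniteDimensional k (A ⧸ I.restrictScalars k) ∧ (I : Set A) ⊆ s

/-- `V` is a pseudocompact `A`-module: Hausdorff, complete, with a basis of neighbourhoods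
of `0` consisting of open submodules of finite codimension over `k`. -/
structure IsPseudocompactModule (k : Type) [Field k] (A : Type) [Ring A] [Algebra k A]
    (V : Type) [AddCommGroup V] [Module k V] [Module A V] [IsScalarTower k A V]
    [UniformSpace V] [IsUniformAddGroup V] : Prop where
  t2 : T2Space V
  complete : CompleteSpace V
  basis : ∀ s ∈ nhds (0 : V), ∃ p : Submodule A V,
    IsOpen (p : Set V) ∧ FiniteDimensional k (V ⧸ p.restrictScalars k) ∧ (p : Set V) ⊆ s

/-- A pseudocompact algebra `A` is *pointed* if `A/J(A)` is isomorphic to a finite product of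
copies of `k`; equivalently, there is a surjective `k`-algebra homomorphism `A → kⁿ`
whose kernel is `J(A)`. -/
def IsPointed (k : Type) [Field k] (A : Type) [Ring A] [Algebra k A] [TopologicalSpace A] :
    Prop :=
  ∃ (n : ℕ) (φ : A →ₐ[k] (Fin n → k)), Function.Surjective φ ∧ RingHom.ker φ = openJacobson A

/-- A *primitive idempotent* is an idempotent which cannot be written as the sum of two
non-zero orthogonal idempotents. -/
def IsPrimitiveIdempotent {A : Type} [Ring A] (e : A) : Prop :=
  IsIdempotentElem e ∧
    ¬ ∃ f g : A, IsIdempotentElem f ∧ IsIdempotentElem g ∧ f ≠ 0 ∧ g ≠ 0 ∧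
      f * g = 0 ∧ g * f = 0 ∧ e = f + g

section Aux
variable {k : Type} [Field k] {A : Type} [Ring A] [Algebra k A]
  [UniformSpace A] [IsUniformAddGroup A] [IsTopologicalRing A]

lemma ideal_isOpen_of_le {I K : Ideal A} (hI : IsOpen (I : Set A)) (h : I ≤ K) :
    IsOpen (K : Set A) :=
  AddSubgroup.isOpen_mono (H₁ := I.toAddSubgroup) (H₂ := K.toAddSubgroup) h hI

lemma pow_mem_of_mem_openJacobson
    {x : A} (hx : x ∈ openJacobson A)
    {I : Ideal A} (hI2 : ∀ a ∈ I, ∀ b : A, a * b ∈ I)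
    (hIopen : IsOpen (I : Set A))
    (hIfd : FiniteDimensional k (A ⧸ I.restrictScalars k)) :
    ∃ N : ℕ, x ^ (N + 1) ∈ I := by
  classical
  set q := (I.restrictScalars k).mkQ with hq
  set L : ℕ → Ideal A := fun n => Ideal.span {x ^ (n+1)} ⊔ I with hL
  have hIL : ∀ n, I ≤ L n := fun n => le_sup_right
  have hmono : ∀ n, L (n+1) ≤ L n := by
    intro n
    refine sup_le ?_ le_sup_right
    rw [Ideal.span_le]
    rintro _ rfl
    have : x ^ (n+1+1) = x • x ^ (n+1) := by
      rw [smul_eq_mul, ← pow_succ']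
    rw [this]
    exact Submodule.smul_mem _ _ (le_sup_left (α := Ideal A) (Ideal.subset_span rfl))
  set d : ℕ → ℕ := fun n => Module.finrank k (Submodule.map q ((L n).restrictScalars k)) with hd
  have hdmono : ∀ n, d (n+1) ≤ d n := fun n =>
    Submodule.finrank_mono (Submodule.map_mono (fun y hy => hmono n hy))
  have hrange : (Set.range d).Nonempty := ⟨d 0, ⟨0, rfl⟩⟩
  obtain ⟨n, hn⟩ := Nat.sInf_mem hrange
  have heq : L n = L (n+1) := by
    have h1 : Submodule.map q ((L (n+1)).restrictScalars k) ≤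
        Submodule.map q ((L n).restrictScalars k) :=
      Submodule.map_mono (fun y hy => hmono n hy)
    have h2 : d n ≤ d (n+1) := hn ▸ Nat.sInf_le ⟨n+1, rfl⟩
    have h3 : Submodule.map q ((L (n+1)).restrictScalars k) =
        Submodule.map q ((L n).restrictScalars k) :=
      Submodule.eq_of_le_of_finrank_eq h1 (le_antisymm (hdmono n) h2)
    have hker : ∀ m, LinearMap.ker q ≤ (L m).restrictScalars k := by
      intro m y hy
      rw [Submodule.ker_mkQ] at hy
      exact hIL m hy
    have := congrArg (Submodule.comap q) h3
    rw [Submodule.comap_map_eq_self (hker (n+1)), Submodule.comap_map_eq_self (hker n)] at this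
    exact (Submodule.restrictScalars_injective k _ _ this).symm
  have hx0 : x ^ (n+1) ∈ L n := le_sup_left (α := Ideal A) (Ideal.subset_span rfl)
  rw [heq] at hx0
  have hx1 : x ^ (n+1) ∈ Ideal.span {x ^ (n+1+1)} ⊔ I := hx0
  refine ⟨n, ?_⟩
  obtain ⟨y, hy, z, hz, hyz⟩ := Submodule.mem_sup.mp hx1
  obtain ⟨a, rfl⟩ := Ideal.mem_span_singleton'.mp hy
  have key : (1 - a * x) * x ^ (n+1) = z := by
    have : a * x ^ (n+1+1) = (a * x) * x ^ (n+1) := by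
      rw [pow_succ', ← mul_assoc]
    rw [sub_mul, one_mul, ← this]
    rw [← hyz, add_sub_cancel_left]
  have hone : (1:A) ∈ Ideal.span {1 - a * x} ⊔ I := by
    by_contra hcon
    have hne : Ideal.span {1 - a * x} ⊔ I ≠ ⊤ := by
      intro h; rw [h] at hcon; exact hcon trivial
    obtain ⟨M, hMmax, hMle⟩ := Ideal.exists_le_maximal _ hne
    have hMopen : IsOpen (M : Set A) := ideal_isOpen_of_le hIopen (le_sup_right.trans hMle)
    have hle : openJacobson A ≤ M := sInf_le ⟨hMopen, hMmax⟩
    have hxM : x ∈ M := hle hx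
    have h1M : (1 - a * x) ∈ M := hMle (le_sup_left (α := Ideal A) (Ideal.subset_span rfl))
    have : (1:A) ∈ M := by
      have := M.add_mem h1M (M.mul_mem_left a hxM)
      simpa using this
    exact hMmax.ne_top (Ideal.eq_top_iff_one M |>.mpr this)
  obtain ⟨u, hu, w, hw, huw⟩ := Submodule.mem_sup.mp hone
  obtain ⟨v, rfl⟩ := Ideal.mem_span_singleton'.mp hu
  have : x ^ (n+1) = v * z + w * x ^ (n+1) := by
    calc x ^ (n+1) = (v * (1 - a*x) + w) * x ^ (n+1) := by rw [huw, one_mul]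
    _ = v * ((1 - a*x) * x ^ (n+1)) + w * x ^ (n+1) := by rw [add_mul, mul_assoc]
    _ = v * z + w * x ^ (n+1) := by rw [key]
  rw [this]
  exact I.add_mem (I.mul_mem_left v hz) (hI2 w hw _)

lemma eq_zero_of_mem_all (hA : IsPseudocompactAlgebra k A) {x : A}
    (h : ∀ s ∈ nhds (0:A), x ∈ s) : x = 0 := by
  haveI := hA.t2
  by_contra hx
  have : x ∈ ({x}ᶜ : Set A) :=
    h _ (isOpen_compl_singleton.mem_nhds (by simpa using (Ne.symm hx)))
  exact this rfl

lemma idem_eq_zero_of_mem_openJacobson (hA : IsPseudocompactAlgebra k A) {x : A}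
    (hid : IsIdempotentElem x) (hx : x ∈ openJacobson A) : x = 0 := by
  refine eq_zero_of_mem_all hA ?_
  intro s hs
  obtain ⟨I, hI2, hIopen, hIfd, hIs⟩ := hA.basis s hs
  obtain ⟨N, hN⟩ := pow_mem_of_mem_openJacobson (k := k) hx hI2 hIopen hIfd
  rw [hid.pow_succ_eq] at hN
  exact hIs hN

lemma openJacobson_isOpen (hfd : FiniteDimensional k (A ⧸ Jrad k A)) :
    IsOpen ((openJacobson A : Set A)) := by
  classical
  set S := {I : Ideal A | IsOpen (I : Set A) ∧ I.IsMaximal} with hS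
  set q := (Jrad k A).mkQ with hq
  set D : Set ℕ := {d | ∃ F : Finset (Ideal A), ↑F ⊆ S ∧
      d = Module.finrank k (Submodule.map q ((F.inf id).restrictScalars k))} with hD
  have hDne : D.Nonempty := ⟨_, ∅, by simp, rfl⟩
  obtain ⟨F₀, hF₀S, hF₀d⟩ := Nat.sInf_mem hDne
  have hJle : ∀ F : Finset (Ideal A), ↑F ⊆ S → openJacobson A ≤ F.inf id := by
    intro F hF
    exact Finset.le_inf fun I hI => sInf_le (hF hI)
  have hker : ∀ (P : Ideal A), openJacobson A ≤ P →
      LinearMap.ker q ≤ P.restrictScalars k := by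
    intro P hP y hy
    rw [hq, Submodule.ker_mkQ] at hy
    exact hP hy
  have hmain : F₀.inf id ≤ openJacobson A := by
    refine le_sInf ?_
    intro M hM
    by_contra hnle
    have hlt : (insert M F₀).inf id < F₀.inf id := by
      rw [Finset.inf_insert]
      refine lt_of_le_of_ne inf_le_right ?_
      intro hcon
      exact hnle (hcon ▸ inf_le_left)
    have hltk : ((insert M F₀).inf id).restrictScalars k <
        (F₀.inf id).restrictScalars k := by
      rw [lt_iff_le_and_ne] at hlt ⊢
      exact ⟨fun y hy => hlt.1 hy, fun hcon =>
        hlt.2 (Submodule.restrictScalars_injective k _ _ hcon)⟩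
    have hmaplt : Submodule.map q (((insert M F₀).inf id).restrictScalars k) <
        Submodule.map q ((F₀.inf id).restrictScalars k) := by
      refine lt_of_le_of_ne (Submodule.map_mono hltk.le) ?_
      intro hcon
      have := congrArg (Submodule.comap q) hcon
      rw [Submodule.comap_map_eq_self (hker _ (hJle _ (by
            intro I hI
            simp only [Finset.coe_insert, Set.mem_insert_iff] at hI
            rcases hI with rfl | hI
            exacts [hM, hF₀S hI]))),
          Submodule.comap_map_eq_self (hker _ (hJle _ hF₀S))] at this
      exact hltk.ne this
    have hfr : Module.finrank k
        (Submodule.map q (((insert M F₀).inf id).restrictScalars k)) <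
        Module.finrank k (Submodule.map q ((F₀.inf id).restrictScalars k)) :=
      Submodule.finrank_lt_finrank_of_lt hmaplt
    have hmem : Module.finrank k
        (Submodule.map q (((insert M F₀).inf id).restrictScalars k)) ∈ D := by
      refine ⟨insert M F₀, ?_, rfl⟩
      intro I hI
      simp only [Finset.coe_insert, Set.mem_insert_iff] at hI
      rcases hI with rfl | hI
      exacts [hM, hF₀S hI]
    have := Nat.sInf_le hmem
    omega
  have hJeq : openJacobson A = F₀.inf id := le_antisymm (hJle _ hF₀S) hmain
  rw [hJeq]
  -- finite inf of open ideals is open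
  have : ∀ F : Finset (Ideal A), ↑F ⊆ S → IsOpen ((F.inf id : Ideal A) : Set A) := by
    intro F
    induction F using Finset.induction_on with
    | empty =>
      intro _
      rw [Finset.inf_empty]
      simpa using isOpen_univ
    | insert _ _ hnotmem ih =>
      intro hsub
      rw [Finset.inf_insert]
      have h1 := (hsub (Finset.mem_insert_self _ _)).1
      have h2 := ih (fun I hI => hsub (Finset.mem_insert_of_mem hI))
      rw [show (((id _ : Ideal A) ⊓ Finset.inf _ id : Ideal A) : Set A) =
        ((id _ : Ideal A) : Set A) ∩ ((Finset.inf _ id : Ideal A) : Set A) from Submodule.coe_inf]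
      exact IsOpen.inter h1 h2
  exact this F₀ hF₀S


lemma lift_idem (hA : IsPseudocompactAlgebra k A) (hJo : IsOpen ((openJacobson A : Set A)))
    {e x0 : A} (he : IsIdempotentElem e) (hx0e : e * x0 * e = x0)
    (hx0 : x0 * x0 - x0 ∈ openJacobson A) :
    ∃ f : A, IsIdempotentElem f ∧ e * f = f ∧ f * e = f ∧ f - x0 ∈ openJacobson A := by
  classical
  set J := openJacobson A with hJ
  set F : A → A := fun t => 3 * t^2 - 2 * t^3 with hF
  set x : ℕ → A := fun n => F^[n] x0 with hxdef
  have hxsucc : ∀ n, x (n+1) = F (x n) := fun n => Function.iterate_succ_apply' F n x0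
  have hxzero : x 0 = x0 := rfl
  set y : ℕ → A := fun n => x n * x n - x n with hydef
  have hFval : ∀ t : A, F t = 3 * t^2 - 2 * t^3 := fun t => rfl
  -- commutation with x0
  have hcomm : ∀ n, Commute x0 (x n) := by
    intro n; induction n with
    | zero => exact Commute.refl x0
    | succ n ih =>
      rw [hxsucc, hFval]
      exact ((Commute.ofNat_right x0 3).mul_right (ih.pow_right 2)).sub_right
        ((Commute.ofNat_right x0 2).mul_right (ih.pow_right 3))
  -- e absorbs
  have hex0 : e * x0 = x0 := by
    calc e * x0 = e * (e * x0 * e) := by rw [hx0e]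
    _ = e * e * x0 * e := by rw [← mul_assoc, ← mul_assoc]
    _ = e * x0 * e := by rw [he]
    _ = x0 := hx0e
  have hx0e' : x0 * e = x0 := by
    calc x0 * e = (e * x0 * e) * e := by rw [hx0e]
    _ = e * x0 * (e * e) := by rw [mul_assoc]
    _ = e * x0 * e := by rw [he]
    _ = x0 := hx0e
  have habsL : ∀ t : A, e * t = t → e * F t = F t := by
    intro t ht
    rw [hFval, mul_sub]
    have h2 : e * t^2 = t^2 := by rw [pow_two, ← mul_assoc, ht]
    have h3 : e * t^3 = t^3 := by
      rw [pow_succ, ← mul_assoc, h2]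
    rw [← mul_assoc, (Commute.ofNat_right e 3).eq, mul_assoc, h2,
        ← mul_assoc, (Commute.ofNat_right e 2).eq, mul_assoc, h3]
  have habsR : ∀ t : A, t * e = t → F t * e = F t := by
    intro t ht
    rw [hFval, sub_mul]
    have h2 : t^2 * e = t^2 := by rw [pow_two, mul_assoc, ht]
    have h3 : t^3 * e = t^3 := by rw [pow_succ, mul_assoc, ht]
    rw [mul_assoc, h2, mul_assoc, h3]
  have heL : ∀ n, e * x n = x n := by
    intro n; induction n with
    | zero => exact hex0
    | succ n ih => rw [hxsucc]; exact habsL _ ih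
  have heR : ∀ n, x n * e = x n := by
    intro n; induction n with
    | zero => exact hx0e'
    | succ n ih => rw [hxsucc]; exact habsR _ ih
  -- y identities
  have hyid : ∀ n, y (n+1) = (y n * ((2 * x n - 1)^2 - 4)) * y n := by
    intro n
    show x (n+1) * x (n+1) - x (n+1) = _
    rw [hxsucc, hFval]
    show _ = ((x n * x n - x n) * ((2 * x n - 1)^2 - 4)) * (x n * x n - x n)
    noncomm_ring
  have hxdiff : ∀ n, x (n+1) - x n = -((2 * x n - 1) * y n) := by
    intro n
    rw [hxsucc, hFval]
    show _ = -((2 * x n - 1) * (x n * x n - x n))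
    noncomm_ring
  have hyJ : ∀ n, y n ∈ J := by
    intro n; induction n with
    | zero => exact hx0
    | succ n ih => rw [hyid]; exact J.mul_mem_left _ ih
  have hxdiffJ : ∀ n, x (n+1) - x n ∈ J := by
    intro n; rw [hxdiff]; exact neg_mem (J.mul_mem_left _ (hyJ n))
  -- power form
  have hpow : ∀ n, ∃ c, Commute x0 c ∧ y n = y 0 ^ (2^n) * c := by
    intro n; induction n with
    | zero => exact ⟨1, Commute.one_right x0, by norm_num⟩
    | succ n ih =>
      obtain ⟨c, hc, hyn⟩ := ih
      set dd : A := (2 * x n - 1)^2 - 4 with hdd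
      have hd : Commute x0 dd :=
        (((Commute.ofNat_right x0 2).mul_right (hcomm n)).sub_right
          (Commute.one_right x0)).pow_right 2 |>.sub_right (Commute.ofNat_right x0 4)
      have hy0 : Commute (y 0) c := by
        have : Commute c (y 0) := by
          show Commute c (x 0 * x 0 - x 0)
          rw [hxzero]
          exact (hc.symm.mul_right hc.symm).sub_right hc.symm
        exact this.symm
      have hy0d : Commute (y 0) dd := by
        have : Commute dd x0 := hd.symm
        have : Commute dd (y 0) := by
          show Commute dd (x 0 * x 0 - x 0)
          rw [hxzero]
          exact (this.mul_right this).sub_right this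
        exact this.symm
      refine ⟨c * dd * c, (hc.mul_right hd).mul_right hc, ?_⟩
      rw [hyid, hyn]
      set m := 2^n with hm
      set a := y 0 ^ m with ha
      have hcm : Commute (c * dd) a := ((hy0.symm).mul_left (hy0d.symm)).pow_right m
      have key : (a * c * dd) * (a * c) = (a * a) * (c * dd * c) := by
        calc (a * c * dd) * (a * c) = (a * (c * dd)) * (a * c) := by rw [mul_assoc a c dd]
          _ = ((a * (c * dd)) * a) * c := (mul_assoc _ a c).symm
          _ = (a * ((c * dd) * a)) * c := by rw [mul_assoc a (c*dd) a]
          _ = (a * (a * (c * dd))) * c := by rw [hcm.eq]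
          _ = ((a * a) * (c * dd)) * c := by rw [mul_assoc a a (c*dd)]
          _ = (a * a) * (c * dd * c) := by rw [mul_assoc, mul_assoc]
      rw [key, ha, ← pow_add]
      have hmm : m + m = 2^(n+1) := by rw [pow_succ]; omega
      rw [hmm]
  -- eventual membership in basis ideals
  have hyI : ∀ (I : Ideal A), (∀ a ∈ I, ∀ b : A, a * b ∈ I) → IsOpen (I : Set A) →
      FiniteDimensional k (A ⧸ I.restrictScalars k) → ∃ N, ∀ n ≥ N, y n ∈ I := by
    intro I hI2 hIopen hIfd
    obtain ⟨M, hM⟩ := pow_mem_of_mem_openJacobson (k := k) (hyJ 0) hI2 hIopen hIfd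
    refine ⟨M + 1, fun n hn => ?_⟩
    obtain ⟨c, hc, hyn⟩ := hpow n
    have hle : M + 1 ≤ 2^n := by
      calc M + 1 ≤ 2^(M+1) := le_of_lt Nat.lt_two_pow_self
      _ ≤ 2^n := Nat.pow_le_pow_right (by norm_num) hn
    have : y 0 ^ (2^n) = y 0 ^ (M+1) * y 0 ^ (2^n - (M+1)) := by
      rw [← pow_add, Nat.add_sub_cancel' hle]
    rw [hyn, this, mul_assoc]
    exact hI2 _ hM _
  -- Cauchy sequence
  have hcauchy : CauchySeq x := by
    rw [cauchySeq_iff]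
    intro V hV
    rw [uniformity_eq_comap_nhds_zero A, Filter.mem_comap] at hV
    obtain ⟨s, hs, hsV⟩ := hV
    obtain ⟨I, hI2, hIopen, hIfd, hIs⟩ := hA.basis s hs
    obtain ⟨N, hN⟩ := hyI I hI2 hIopen hIfd
    have hstep : ∀ n ≥ N, x (n+1) - x n ∈ I := by
      intro n hn
      rw [hxdiff]
      exact neg_mem (I.mul_mem_left _ (hN n hn))
    have hdiff : ∀ n ≥ N, ∀ m ≥ n, x m - x n ∈ I := by
      intro n hn m hm
      induction m, hm using Nat.le_induction with
      | base => simpa using I.zero_mem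
      | succ m hm ih =>
        have : x (m+1) - x n = (x (m+1) - x m) + (x m - x n) := by abel
        rw [this]
        exact I.add_mem (hstep m (le_trans hn hm)) ih
    refine ⟨N, fun a ha b hb => ?_⟩
    apply hsV
    have : x b - x a ∈ I := by
      rcases le_total a b with h | h
      · exact hdiff a ha b h
      · have := hdiff b hb a h
        have h2 := I.neg_mem this
        simpa using h2
    exact hIs this
  haveI := hA.complete
  haveI := hA.t2
  obtain ⟨f, hf⟩ := cauchySeq_tendsto_of_complete hcauchy
  -- y → 0
  have hy0 : Filter.Tendsto y Filter.atTop (nhds 0) := by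
    rw [Filter.tendsto_def]
    intro s hs
    obtain ⟨I, hI2, hIopen, hIfd, hIs⟩ := hA.basis s hs
    obtain ⟨N, hN⟩ := hyI I hI2 hIopen hIfd
    rw [Filter.mem_atTop_sets]
    exact ⟨N, fun n hn => hIs (hN n hn)⟩
  have hidem : IsIdempotentElem f := by
    have h1 : Filter.Tendsto (fun n => x n * x n - x n) Filter.atTop (nhds (f * f - f)) :=
      (hf.mul hf).sub hf
    have h2 : f * f - f = 0 := tendsto_nhds_unique h1 hy0
    exact sub_eq_zero.mp h2
  have hef : e * f = f := by
    have h1 : Filter.Tendsto (fun n => e * x n) Filter.atTop (nhds (e * f)) :=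
      (tendsto_const_nhds).mul hf
    have h2 : (fun n => e * x n) = x := funext heL
    rw [h2] at h1
    exact tendsto_nhds_unique h1 hf
  have hfe : f * e = f := by
    have h1 : Filter.Tendsto (fun n => x n * e) Filter.atTop (nhds (f * e)) :=
      hf.mul tendsto_const_nhds
    have h2 : (fun n => x n * e) = x := funext heR
    rw [h2] at h1
    exact tendsto_nhds_unique h1 hf
  have hfx0 : f - x0 ∈ J := by
    have hclosed : IsClosed (J : Set A) :=
      AddSubgroup.isClosed_of_isOpen J.toAddSubgroup hJo
    have hmem : ∀ n, x n - x0 ∈ J := by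
      intro n; induction n with
      | zero => simpa [hxzero] using J.zero_mem
      | succ n ih =>
        have : x (n+1) - x0 = (x (n+1) - x n) + (x n - x0) := by abel
        rw [this]
        exact J.add_mem (hxdiffJ n) ih
    have h1 : Filter.Tendsto (fun n => x n - x0) Filter.atTop (nhds (f - x0)) :=
      hf.sub tendsto_const_nhds
    exact hclosed.mem_of_tendsto h1 (Filter.Eventually.of_forall hmem)
  exact ⟨f, hidem, hef, hfe, hfx0⟩
lemma idem_coord {n : ℕ} {u : Fin n → k} (hu : IsIdempotentElem u) (i : Fin n) :
    u i = 0 ∨ u i = 1 := by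
  have h : u i * u i = u i := by
    have := congrFun hu i
    rwa [Pi.mul_apply] at this
  have h2 : u i * (u i - 1) = 0 := by rw [mul_sub, h, mul_one, sub_self]
  rcases mul_eq_zero.mp h2 with h3 | h3
  · exact Or.inl h3
  · exact Or.inr (sub_eq_zero.mp h3)

lemma lift_corner (hA : IsPseudocompactAlgebra k A) (hJo : IsOpen ((openJacobson A : Set A)))
    {n : ℕ} {φ : A →ₐ[k] (Fin n → k)}
    (hsurj : Function.Surjective φ) (hker : RingHom.ker φ = openJacobson A)
    {e : A} (he : IsIdempotentElem e) {u : Fin n → k} (hu : IsIdempotentElem u)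
    (hue : u * φ e = u) :
    ∃ f, IsIdempotentElem f ∧ e * f = f ∧ f * e = f ∧ φ f = u := by
  obtain ⟨z, hz⟩ := hsurj u
  set x0 := e * z * e with hx0def
  have h1 : e * (e * z * e) = e * z * e := by
    rw [← mul_assoc, ← mul_assoc, he]
  have h2 : (e * z * e) * e = e * z * e := by rw [mul_assoc, he]
  have hx0e : e * x0 * e = x0 := by rw [hx0def, h1, h2]
  have hφe : IsIdempotentElem (φ e) := by
    show φ e * φ e = φ e
    rw [← map_mul, he]
  have hφx0 : φ x0 = u := by
    rw [hx0def, map_mul, map_mul, hz]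
    calc φ e * u * φ e = u * φ e * φ e := by rw [mul_comm (φ e) u]
    _ = u * (φ e * φ e) := mul_assoc _ _ _
    _ = u * φ e := by rw [hφe]
    _ = u := hue
  have hx0J : x0 * x0 - x0 ∈ openJacobson A := by
    rw [← hker]
    have : φ (x0 * x0 - x0) = 0 := by rw [map_sub, map_mul, hφx0, hu, sub_self]
    exact RingHom.mem_ker.mpr this
  obtain ⟨f, hfi, hef, hfe, hfJ⟩ := lift_idem hA hJo he hx0e hx0J
  refine ⟨f, hfi, hef, hfe, ?_⟩
  rw [← hker] at hfJ
  have : φ (f - x0) = 0 := RingHom.mem_ker.mp hfJ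
  rw [map_sub, sub_eq_zero] at this
  rw [this, hφx0]

lemma coord_eq_of_prim (hA : IsPseudocompactAlgebra k A)
    (hJo : IsOpen ((openJacobson A : Set A))) {n : ℕ} {φ : A →ₐ[k] (Fin n → k)}
    (hsurj : Function.Surjective φ) (hker : RingHom.ker φ = openJacobson A)
    {e : A} (hprim : IsPrimitiveIdempotent e) {i j : Fin n}
    (hi : φ e i ≠ 0) (hj : φ e j ≠ 0) : i = j := by
  classical
  by_contra hij
  have he := hprim.1
  have hφe : IsIdempotentElem (φ e) := by
    show φ e * φ e = φ e
    rw [← map_mul, he]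
  have hei : φ e i = 1 := (idem_coord hφe i).resolve_left hi
  set u : Fin n → k := Pi.single i 1 with hudef
  have huid : IsIdempotentElem u := by
    show u * u = u
    funext l
    rw [Pi.mul_apply, hudef]
    by_cases hl : l = i
    · subst hl; rw [Pi.single_eq_same, one_mul]
    · rw [Pi.single_eq_of_ne hl, zero_mul]
  have hue : u * φ e = u := by
    funext l
    rw [Pi.mul_apply, hudef]
    by_cases hl : l = i
    · subst hl; rw [Pi.single_eq_same, one_mul, hei]
    · rw [Pi.single_eq_of_ne hl, zero_mul]
  obtain ⟨f, hfi, hef, hfe, hφf⟩ := lift_corner hA hJo hsurj hker he huid hue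
  have hfg : f * (e - f) = 0 := by rw [mul_sub, hfe, hfi, sub_self]
  have hgf : (e - f) * f = 0 := by rw [sub_mul, hef, hfi, sub_self]
  have hgidem : IsIdempotentElem (e - f) := by
    show (e - f) * (e - f) = e - f
    rw [sub_mul, mul_sub, mul_sub, he, hef, hfe, hfi]
    abel
  have hf0 : f ≠ 0 := by
    intro h
    rw [h, map_zero] at hφf
    have := congrFun hφf i
    rw [hudef, Pi.single_eq_same] at this
    simp at this
  have hg0 : e - f ≠ 0 := by
    intro h
    have hef2 : e = f := by rwa [sub_eq_zero] at h
    have : φ e = u := by rw [hef2, hφf]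
    have h3 := congrFun this j
    rw [hudef, Pi.single_eq_of_ne (Ne.symm hij)] at h3
    exact hj h3
  exact hprim.2 ⟨f, e - f, hfi, hgidem, hf0, hg0, hfg, hgf, by abel⟩

lemma prim_of_coord (hA : IsPseudocompactAlgebra k A) {n : ℕ} {φ : A →ₐ[k] (Fin n → k)}
    (hker : RingHom.ker φ = openJacobson A) {x : A} (hx : IsIdempotentElem x)
    (hcoord : ∀ i j : Fin n, φ x i ≠ 0 → φ x j ≠ 0 → i = j) : IsPrimitiveIdempotent x := by
  refine ⟨hx, ?_⟩
  rintro ⟨f, g, hf, hg, hf0, hg0, hfg, hgf, rfl⟩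
  have himf : φ f ≠ 0 := by
    intro h
    exact hf0 (idem_eq_zero_of_mem_openJacobson hA hf
      (hker ▸ RingHom.mem_ker.mpr h))
  have himg : φ g ≠ 0 := by
    intro h
    exact hg0 (idem_eq_zero_of_mem_openJacobson hA hg
      (hker ▸ RingHom.mem_ker.mpr h))
  obtain ⟨i, hi⟩ := Function.ne_iff.mp himf
  obtain ⟨j, hj⟩ := Function.ne_iff.mp himg
  simp only [Pi.zero_apply] at hi hj
  have hφf : IsIdempotentElem (φ f) := by show φ f * φ f = φ f; rw [← map_mul, hf]
  have hφg : IsIdempotentElem (φ g) := by show φ g * φ g = φ g; rw [← map_mul, hg]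
  have hprod : ∀ l, φ f l * φ g l = 0 := by
    intro l
    have : φ (f * g) = 0 := by rw [hfg, map_zero]
    have := congrFun this l
    rwa [map_mul, Pi.mul_apply] at this
  have hgi : φ g i = 0 := by
    have hfi1 : φ f i = 1 := (idem_coord hφf i).resolve_left hi
    have := hprod i
    rwa [hfi1, one_mul] at this
  have hfj : φ f j = 0 := by
    have hgj1 : φ g j = 1 := (idem_coord hφg j).resolve_left hj
    have := hprod j
    rwa [hgj1, mul_one] at this
  have hxi : φ (f + g) i ≠ 0 := by
    rw [map_add, Pi.add_apply, hgi, add_zero]; exact hi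
  have hxj : φ (f + g) j ≠ 0 := by
    rw [map_add, Pi.add_apply, hfj, zero_add]; exact hj
  have hij := hcoord i j hxi hxj
  subst hij
  rw [hfj] at hi
  exact hi rfl

lemma family (hA : IsPseudocompactAlgebra k A) (hJo : IsOpen ((openJacobson A : Set A)))
    {n : ℕ} {φ : A →ₐ[k] (Fin n → k)}
    (hsurj : Function.Surjective φ) (hker : RingHom.ker φ = openJacobson A) :
    ∀ (s : Finset (Fin n)) (e : A), IsIdempotentElem e →
      (φ e = fun i => if i ∈ s then 1 else 0) →
      ∃ E : Fin n → A, (∀ i, IsIdempotentElem (E i)) ∧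
        (∀ i, e * E i = E i) ∧ (∀ i, E i * e = E i) ∧
        (∀ i j, i ≠ j → E i * E j = 0) ∧ (∀ i ∉ s, E i = 0) ∧
        (∑ i ∈ s, E i = e) ∧ (∀ i ∈ s, φ (E i) = Pi.single i 1) := by
  classical
  intro s
  induction s using Finset.induction_on with
  | empty =>
    intro e he hφe
    have he0 : e = 0 := by
      refine idem_eq_zero_of_mem_openJacobson hA he ?_
      rw [← hker]
      refine RingHom.mem_ker.mpr ?_
      rw [hφe]
      funext i
      simp
    subst he0
    exact ⟨fun _ => 0, fun i => by simp [IsIdempotentElem],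
      fun i => by simp, fun i => by simp, fun i j _ => by simp,
      fun i _ => rfl, by simp, fun i hi => absurd hi (by simp)⟩
  | @insert i₀ t hi₀ ih =>
    intro e he hφe
    set u : Fin n → k := Pi.single i₀ 1 with hudef
    have huid : IsIdempotentElem u := by
      show u * u = u
      funext l
      rw [Pi.mul_apply, hudef]
      by_cases hl : l = i₀
      · subst hl; rw [Pi.single_eq_same, one_mul]
      · rw [Pi.single_eq_of_ne hl, zero_mul]
    have hue : u * φ e = u := by
      funext l
      by_cases hl : l = i₀
      · subst hl
        simp [hudef, hφe]
      · simp [hudef, hφe, Pi.single_eq_of_ne hl]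
    obtain ⟨f, hfi, hef, hfe, hφf⟩ := lift_corner hA hJo hsurj hker he huid hue
    set g := e - f with hgdef
    have hfg : f * g = 0 := by rw [hgdef, mul_sub, hfe, hfi, sub_self]
    have hgf : g * f = 0 := by rw [hgdef, sub_mul, hef, hfi, sub_self]
    have hgidem : IsIdempotentElem g := by
      show g * g = g
      rw [hgdef, sub_mul, mul_sub, mul_sub, he, hef, hfe, hfi]
      abel
    have hφg : φ g = fun i => if i ∈ t then 1 else 0 := by
      rw [hgdef, map_sub, hφe, hφf]
      funext l
      by_cases hl : l = i₀
      · subst hl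
        simp [hudef, hi₀]
      · simp [hudef, Pi.single_eq_of_ne hl, Finset.mem_insert, hl]
    obtain ⟨E', hE'id, hE'L, hE'R, hE'orth, hE'zero, hE'sum, hE'φ⟩ := ih g hgidem hφg
    -- absorption of g-parts by e
    have hegL : ∀ i, e * E' i = E' i := by
      intro i
      have h1 : e * E' i = e * (g * E' i) := by rw [hE'L]
      rw [h1, ← mul_assoc]
      have h2 : e * g = g := by rw [hgdef, mul_sub, he, hef]
      rw [h2, hE'L]
    have hegR : ∀ i, E' i * e = E' i := by
      intro i
      have h1 : E' i * e = (E' i * g) * e := by rw [hE'R]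
      rw [h1, mul_assoc]
      have h2 : g * e = g := by rw [hgdef, sub_mul, he, hfe]
      rw [h2, hE'R]
    refine ⟨Function.update E' i₀ f, ?_, ?_, ?_, ?_, ?_, ?_, ?_⟩
    · intro i
      by_cases hi : i = i₀
      · subst hi; rw [Function.update_self]; exact hfi
      · rw [Function.update_of_ne hi]; exact hE'id i
    · intro i
      by_cases hi : i = i₀
      · subst hi; rw [Function.update_self]; exact hef
      · rw [Function.update_of_ne hi]; exact hegL i
    · intro i
      by_cases hi : i = i₀
      · subst hi; rw [Function.update_self]; exact hfe
      · rw [Function.update_of_ne hi]; exact hegR i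
    · intro i j hij
      by_cases hi : i = i₀
      · subst hi
        rw [Function.update_self, Function.update_of_ne (Ne.symm hij)]
        have : f * E' j = f * (g * E' j) := by rw [hE'L]
        rw [this, ← mul_assoc, hfg, zero_mul]
      · by_cases hj : j = i₀
        · subst hj
          rw [Function.update_self, Function.update_of_ne hi]
          have : E' i * f = (E' i * g) * f := by rw [hE'R]
          rw [this, mul_assoc, hgf, mul_zero]
        · rw [Function.update_of_ne hi, Function.update_of_ne hj]
          exact hE'orth i j hij
    · intro i hi
      have hii₀ : i ≠ i₀ := fun h => hi (h ▸ Finset.mem_insert_self i₀ t)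
      rw [Function.update_of_ne hii₀]
      exact hE'zero i (fun h => hi (Finset.mem_insert_of_mem h))
    · rw [Finset.sum_insert hi₀, Function.update_self]
      have : ∑ i ∈ t, Function.update E' i₀ f i = ∑ i ∈ t, E' i := by
        refine Finset.sum_congr rfl ?_
        intro i hi
        have : i ≠ i₀ := by rintro rfl; exact hi₀ hi
        exact Function.update_of_ne this _ _
      rw [this, hE'sum, hgdef]
      abel
    · intro i hi
      rcases Finset.mem_insert.mp hi with rfl | hit
      · rw [Function.update_self, hφf, hudef]
      · have : i ≠ i₀ := by rintro rfl; exact hi₀ hit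
        rw [Function.update_of_ne this]
        exact hE'φ i hit

end Aux

/-- Let `A`, `B` be pointed pseudocompact `k`-algebras with finite
dimensional radical quotients and `α : A → B` a continuous unital algebra homomorphism.
Then `α` respects primitive idempotents if and only if the induced homomorphism
`A/J(A) → B/J(B)` is surjective (the latter being expressed as: every `b ∈ B` is congruent
to some `α(a)` modulo `J(B)`). -/
theorem respects_primitive_idempotents_iff
    (k : Type) [Field k] [PerfectField k]
    (A : Type) [Ring A] [Algebra k A] [UniformSpace A] [IsUniformAddGroup A] [IsTopologicalRing A]
    (B : Type) [Ring B] [Algebra k B] [UniformSpace B] [IsUniformAddGroup B] [IsTopologicalRing B]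
    (hA : IsPseudocompactAlgebra k A) (hB : IsPseudocompactAlgebra k B)
    (hAp : IsPointed k A) (hBp : IsPointed k B)
    (hAfd : FiniteDimensional k (A ⧸ Jrad k A))
    (hBfd : FiniteDimensional k (B ⧸ Jrad k B))
    (α : A →ₐ[k] B) (hcont : Continuous α) :
    (∀ e : A, IsPrimitiveIdempotent e → IsPrimitiveIdempotent (α e)) ↔
      (∀ b : B, ∃ a : A, α a - b ∈ Jrad k B) := by
  classical
  obtain ⟨n, φA, hφAs, hφAk⟩ := hAp
  obtain ⟨m, φB, hφBs, hφBk⟩ := hBp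
  have hJAo : IsOpen ((openJacobson A : Set A)) := openJacobson_isOpen hAfd
  have hJBo : IsOpen ((openJacobson B : Set B)) := openJacobson_isOpen hBfd
  have hJradmem : ∀ x : B, x ∈ Jrad k B ↔ φB x = 0 := by
    intro x
    constructor
    · intro hx
      have h1 : x ∈ openJacobson B := hx
      rw [← hφBk] at h1
      exact RingHom.mem_ker.mp h1
    · intro hx
      have h1 : x ∈ RingHom.ker φB := RingHom.mem_ker.mpr hx
      rw [hφBk] at h1
      exact h1
  -- α maps the radical into the radical
  have hαJ : ∀ x : A, x ∈ openJacobson A → φB (α x) = 0 := by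
    intro x hx
    funext j
    show φB (α x) j = (0 : Fin m → k) j
    rw [Pi.zero_apply]
    set ψj : A →ₐ[k] k := (Pi.evalAlgHom k (fun _ => k) j).comp (φB.comp α) with hψj
    have hψval : ∀ a : A, ψj a = φB (α a) j := fun a => rfl
    set K : Ideal A := RingHom.ker ψj with hK
    have hsub : (⇑α ⁻¹' (openJacobson B : Set B)) ⊆ (K : Set A) := by
      intro a ha
      have h1 : α a ∈ RingHom.ker φB := by rw [hφBk]; exact ha
      have h2 : φB (α a) = 0 := RingHom.mem_ker.mp h1
      have h3 : ψj a = 0 := by rw [hψval, h2, Pi.zero_apply]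
      exact RingHom.mem_ker.mpr h3
    have hKopen : IsOpen (K : Set A) := by
      apply AddSubgroup.isOpen_of_mem_nhds K.toAddSubgroup (g := (0:A))
      refine Filter.mem_of_superset ?_ hsub
      refine IsOpen.mem_nhds (hJBo.preimage hcont) ?_
      show α 0 ∈ (openJacobson B : Set B)
      rw [map_zero]
      exact (openJacobson B).zero_mem
    have hKmax : K.IsMaximal := by
      constructor
      constructor
      · intro h
        have h1 : (1:A) ∈ K := h ▸ Submodule.mem_top
        have h2 : ψj 1 = 0 := RingHom.mem_ker.mp h1
        rw [map_one] at h2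
        exact one_ne_zero h2
      · intro Jl hJl
        rw [Ideal.eq_top_iff_one]
        obtain ⟨a, haJ, haK⟩ := SetLike.exists_of_lt hJl
        have hc : ψj a ≠ 0 := fun h => haK (RingHom.mem_ker.mpr h)
        have hb : a - (algebraMap k A (ψj a)) ∈ K := by
          refine RingHom.mem_ker.mpr ?_
          rw [map_sub, AlgHom.commutes]
          simp
        have hcJ : algebraMap k A (ψj a) ∈ Jl := by
          have h4 := Jl.sub_mem haJ (le_of_lt hJl hb)
          have h5 : a - (a - algebraMap k A (ψj a)) = algebraMap k A (ψj a) := by abel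
          rwa [h5] at h4
        have h6 := Jl.mul_mem_left (algebraMap k A (ψj a)⁻¹) hcJ
        rwa [← map_mul, inv_mul_cancel₀ hc, map_one] at h6
    have hle : openJacobson A ≤ K := sInf_le ⟨hKopen, hKmax⟩
    have h0 : ψj x = 0 := RingHom.mem_ker.mp (hle hx)
    rw [← hψval, h0]
  constructor
  · -- forward: respects primitive idempotents → surjective on radical quotients
    intro hresp b
    have hφA1 : φA 1 = fun i => if i ∈ (Finset.univ : Finset (Fin n)) then 1 else 0 := by
      rw [map_one]; funext i; simp
    obtain ⟨E, hEid, hEL, hER, hEorth, hEzero, hEsum, hEφ⟩ :=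
      family hA hJAo hφAs hφAk Finset.univ 1 IsIdempotentElem.one hφA1
    have hEprim : ∀ i, IsPrimitiveIdempotent (E i) := by
      intro i
      refine prim_of_coord hA hφAk (hEid i) ?_
      intro a b ha hb
      rw [hEφ i (Finset.mem_univ i)] at ha hb
      have ha' : a = i := by
        by_contra h; exact ha (Pi.single_eq_of_ne h 1)
      have hb' : b = i := by
        by_contra h; exact hb (Pi.single_eq_of_ne h 1)
      rw [ha', hb']
    have hαprim : ∀ i, IsPrimitiveIdempotent (α (E i)) := fun i => hresp _ (hEprim i)
    have hαEid : ∀ i, IsIdempotentElem (φB (α (E i))) := by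
      intro i
      show _ * _ = _
      rw [← map_mul, ← map_mul, hEid i]
    have hcoordB : ∀ i, ∀ a b : Fin m, φB (α (E i)) a ≠ 0 → φB (α (E i)) b ≠ 0 → a = b :=
      fun i a b ha hb => coord_eq_of_prim hB hJBo hφBs hφBk (hαprim i) ha hb
    have hsum1 : ∑ i, φB (α (E i)) = 1 := by
      have h1 : ∑ i, φB (α (E i)) = φB (α (∑ i, E i)) := by rw [map_sum, map_sum]
      rw [h1, hEsum, map_one, map_one]
    set t := φB b with ht
    have hex : ∀ j : Fin m, ∃ i : Fin n, φB (α (E i)) = (Pi.single j 1 : Fin m → k) := by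
      intro j
      have h1 : (∑ i, φB (α (E i))) j = 1 := by rw [hsum1]; exact Pi.one_apply j
      rw [Finset.sum_apply] at h1
      have h2 : ∃ i, φB (α (E i)) j ≠ 0 := by
        by_contra h
        push_neg at h
        rw [Finset.sum_eq_zero (fun i _ => h i)] at h1
        exact one_ne_zero h1.symm
      obtain ⟨i, hi⟩ := h2
      refine ⟨i, ?_⟩
      funext l
      by_cases hl : l = j
      · subst hl
        rw [Pi.single_eq_same]
        exact (idem_coord (hαEid i) l).resolve_left hi
      · rw [Pi.single_eq_of_ne hl]
        by_contra h
        exact hl (hcoordB i l j h hi)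
    choose σ' hσ' using hex
    refine ⟨∑ j, (t j) • E (σ' j), ?_⟩
    rw [hJradmem]
    rw [map_sub]
    have hval : φB (α (∑ j, t j • E (σ' j))) = t := by
      rw [map_sum, map_sum]
      have h1 : ∀ j : Fin m, φB (α (t j • E (σ' j))) = t j • (Pi.single j 1 : Fin m → k) := by
        intro j; rw [map_smul, map_smul, hσ' j]
      rw [Finset.sum_congr rfl (fun j _ => h1 j)]
      funext l
      rw [Finset.sum_apply]
      have hterm : ∀ j : Fin m, (t j • (Pi.single j 1 : Fin m → k)) l = if l = j then t j else 0 := by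
        intro j
        rw [Pi.smul_apply, Pi.single_apply, smul_eq_mul]
        by_cases h : l = j <;> simp [h]
      rw [Finset.sum_congr rfl (fun j _ => hterm j)]
      simp
    rw [hval, ← ht, sub_self]
  · -- backward: surjective on radical quotients → respects primitive idempotents
    intro hsur e heprim
    have hψs : ∀ s : Fin m → k, ∃ a : A, φB (α a) = s := by
      intro s
      obtain ⟨b, hb⟩ := hφBs s
      obtain ⟨a, ha⟩ := hsur b
      rw [hJradmem] at ha
      rw [map_sub, sub_eq_zero] at ha
      exact ⟨a, by rw [ha, hb]⟩
    choose aa haa using fun i : Fin n => hφAs (Pi.single i (1:k))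
    have hker' : ∀ x : A, φA x = 0 → φB (α x) = 0 := by
      intro x hx
      refine hαJ x ?_
      rw [← hφAk]
      exact RingHom.mem_ker.mpr hx
    have hcongr : ∀ x y : A, φA x = φA y → φB (α x) = φB (α y) := by
      intro x y h
      have h1 := hker' (x - y) (by rw [map_sub, h, sub_self])
      rw [map_sub, map_sub, sub_eq_zero] at h1
      exact h1
    have hexσ : ∀ j : Fin m, ∃ i : Fin n, φB (α (aa i)) j ≠ 0 := by
      intro j
      have h1 : φA (∑ i, aa i) = φA 1 := by
        rw [map_sum, map_one]
        rw [Finset.sum_congr rfl (fun i _ => haa i)]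
        funext l
        rw [Finset.sum_apply]
        simp [Pi.single_apply]
      have h2 := hcongr _ _ h1
      rw [map_one] at h2
      have h3 : (∑ i, φB (α (aa i))) j = 1 := by
        rw [← map_sum, ← map_sum, h2, map_one]
        exact Pi.one_apply j
      rw [Finset.sum_apply] at h3
      by_contra h
      push_neg at h
      rw [Finset.sum_eq_zero (fun i _ => h i)] at h3
      exact one_ne_zero h3.symm
    have hidem_a : ∀ i, IsIdempotentElem (φB (α (aa i))) := by
      intro i
      show _ * _ = _
      rw [← map_mul, ← map_mul]
      have : φA (aa i * aa i) = φA (aa i) := by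
        rw [map_mul, haa i]
        funext l
        rw [Pi.mul_apply, Pi.single_apply]
        by_cases h : l = i <;> simp [h]
      rw [hcongr _ _ this]
    have horth_a : ∀ i i' : Fin n, i ≠ i' → ∀ j, φB (α (aa i)) j * φB (α (aa i')) j = 0 := by
      intro i i' hii' j
      have h1 : φA (aa i * aa i') = 0 := by
        rw [map_mul, haa i, haa i']
        funext l
        rw [Pi.mul_apply, Pi.single_apply, Pi.single_apply, Pi.zero_apply]
        by_cases h : l = i
        · subst h
          rw [if_neg hii', mul_zero]
        · rw [if_neg h, zero_mul]
      have h2 := hker' _ h1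
      have h3 := congrFun h2 j
      rwa [map_mul, map_mul, Pi.mul_apply] at h3
    choose σ hσ using hexσ
    have hval : ∀ (j : Fin m) (i : Fin n), φB (α (aa i)) j = if i = σ j then 1 else 0 := by
      intro j i
      by_cases h : i = σ j
      · subst h
        rw [if_pos rfl]
        exact (idem_coord (hidem_a _) j).resolve_left (hσ j)
      · rw [if_neg h]
        have h1 := horth_a i (σ j) h j
        have hσ1 : φB (α (aa (σ j))) j = 1 := (idem_coord (hidem_a _) j).resolve_left (hσ j)
        rwa [hσ1, mul_one] at h1
    have hfact : ∀ (x : A) (j : Fin m), φB (α x) j = φA x (σ j) := by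
      intro x j
      have h1 : φA (∑ i, φA x i • aa i) = φA x := by
        rw [map_sum]
        rw [Finset.sum_congr rfl (fun i _ => by rw [map_smul, haa i])]
        funext l
        rw [Finset.sum_apply]
        have hterm : ∀ i : Fin n, (φA x i • (Pi.single i 1 : Fin n → k)) l
            = if l = i then φA x l else 0 := by
          intro i
          rw [Pi.smul_apply, Pi.single_apply, smul_eq_mul]
          by_cases h : l = i <;> simp [h]
        rw [Finset.sum_congr rfl (fun i _ => hterm i)]
        simp
      have h2 := hcongr _ _ h1
      rw [← h2, map_sum, map_sum, Finset.sum_apply]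
      have hterm2 : ∀ i : Fin n, (φB (α (φA x i • aa i))) j
          = if i = σ j then φA x i else 0 := by
        intro i
        rw [map_smul, map_smul, Pi.smul_apply, hval j i, smul_eq_mul]
        by_cases h : i = σ j <;> simp [h]
      rw [Finset.sum_congr rfl (fun i _ => hterm2 i)]
      simp
    have hσinj : Function.Injective σ := by
      intro j j' h
      by_contra hne
      obtain ⟨a, ha⟩ := hψs (Pi.single j 1)
      have h1 : φB (α a) j = 1 := by rw [ha, Pi.single_eq_same]
      have h2 : φB (α a) j' = 0 := by rw [ha, Pi.single_eq_of_ne (Ne.symm hne)]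
      rw [hfact a j] at h1
      rw [hfact a j'] at h2
      rw [h] at h1
      rw [h1] at h2
      exact one_ne_zero h2
    have hcoordA : ∀ i i' : Fin n, φA e i ≠ 0 → φA e i' ≠ 0 → i = i' :=
      fun i i' hi hi' => coord_eq_of_prim hA hJAo hφAs hφAk heprim hi hi'
    refine prim_of_coord hB hφBk ?_ ?_
    · show α e * α e = α e
      rw [← map_mul, heprim.1]
    · intro a b ha hb
      rw [hfact e a] at ha
      rw [hfact e b] at hb
      exact hσinj (hcoordA _ _ ha hb)
end

section
/- Let A and B be pointed pseudocompact k-algebras with A/J²(A) and B/J²(B) finite dimensional, and let α, β : A → B be continuous unital algebra homomorphisms satisfying (α−β)(A) ⊆ J(B) and (α−β)(J(A)) ⊆ J²(B). Then for every n ≥ 1, (α−β)(Jⁿ(A)) ⊆ J^{n+1}(B). -/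
section AuxLemmas

set_option linter.unusedSectionVars false

theorem aux_fd_of_pointed (k : Type) [Field k] (B : Type) [Ring B] [Algebra k B]
    [TopologicalSpace B] (hBp : IsPointed k B) :
    FiniteDimensional k (B ⧸ Jrad k B) := by
  obtain ⟨m, ψ, -, hk⟩ := hBp
  have hker : Jrad k B = LinearMap.ker (ψ.toLinearMap) := by
    ext x
    simp [Jrad, ← hk, RingHom.mem_ker, LinearMap.mem_ker]
  let f : (B ⧸ Jrad k B) →ₗ[k] (Fin m → k) :=
    (Jrad k B).liftQ ψ.toLinearMap (le_of_eq hker)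
  have hinj : Function.Injective f :=
    LinearMap.ker_eq_bot.mp (Submodule.ker_liftQ_eq_bot _ _ _ (le_of_eq hker.symm))
  exact FiniteDimensional.of_injective f hinj

theorem aux_isOpen_Jrad (k : Type) [Field k] (B : Type) [Ring B] [Algebra k B]
    [TopologicalSpace B] [IsTopologicalRing B] (hBp : IsPointed k B) :
    IsOpen ((Jrad k B : Submodule k B) : Set B) := by
  have hfd : FiniteDimensional k (B ⧸ Jrad k B) := aux_fd_of_pointed k B hBp
  set S : Set (Ideal B) := {I : Ideal B | IsOpen (I : Set B) ∧ I.IsMaximal} with hS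
  set π : B →ₗ[k] B ⧸ Jrad k B := (Jrad k B).mkQ with hπ
  set g : Ideal B → Submodule k (B ⧸ Jrad k B) :=
    fun I => Submodule.map π (I.restrictScalars k) with hg
  set 𝒮 : Set (Submodule k (B ⧸ Jrad k B)) :=
    {W | ∃ s : Finset (Ideal B), ↑s ⊆ S ∧ W = s.inf g} with h𝒮
  have htop : (⊤ : Submodule k (B ⧸ Jrad k B)) ∈ 𝒮 := ⟨∅, by simp, by simp⟩
  classical
  set N : Set ℕ := {n : ℕ | ∃ W ∈ 𝒮, Module.finrank k W = n} with hN
  have hne : N.Nonempty := ⟨_, ⊤, htop, rfl⟩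
  obtain ⟨W, hW𝒮, hWrank⟩ := Nat.sInf_mem hne
  have hmin : ∀ W' ∈ 𝒮, Module.finrank k W ≤ Module.finrank k W' := by
    intro W' hW'
    rw [hWrank]; exact Nat.sInf_le ⟨W', hW', rfl⟩
  have hle : ∀ I ∈ S, W ≤ g I := by
    intro I hI
    obtain ⟨s, hsS, hs⟩ := hW𝒮
    have h1 : W ⊓ g I ∈ 𝒮 := ⟨insert I s, by
        simp only [Finset.coe_insert, Set.insert_subset_iff]; exact ⟨hI, hsS⟩, by
      rw [Finset.inf_insert, ← hs, inf_comm]⟩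
    have h2 : W ⊓ g I = W :=
      Submodule.eq_of_le_of_finrank_le inf_le_left (hmin _ h1)
    exact h2 ▸ inf_le_right
  have hWbot : W = ⊥ := by
    rw [eq_bot_iff]
    intro w hw
    obtain ⟨x, rfl⟩ := Submodule.mkQ_surjective (Jrad k B) w
    have hx : x ∈ openJacobson B := by
      rw [openJacobson, Submodule.mem_sInf]
      intro I hI
      obtain ⟨y, hy, hyx⟩ := hle I hI hw
      have hxy : x - y ∈ Jrad k B := by
        rw [← Submodule.Quotient.mk_eq_zero]
        have : π (x - y) = 0 := by
          rw [map_sub]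
          simp only [hπ, Submodule.mkQ_apply] at hyx ⊢
          rw [hyx, sub_self]
        simpa [hπ] using this
      have hxy' : x - y ∈ I := sInf_le hI hxy
      simpa using I.add_mem hxy' hy
    show Submodule.mkQ _ x = 0
    rw [Submodule.mkQ_apply, Submodule.Quotient.mk_eq_zero]
    exact hx
  obtain ⟨s, hsS, hs⟩ := hW𝒮
  have hJ : Jrad k B = s.inf (fun I => I.restrictScalars k) := by
    apply le_antisymm
    · exact Finset.le_inf fun I hI => fun x hx => sInf_le (hsS hI) hx
    · intro x hx
      have hπx : π x ∈ W := by
        rw [hs, Submodule.mem_finsetInf]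
        intro I hI
        exact ⟨x, (Submodule.mem_finsetInf.mp hx) I hI, rfl⟩
      rw [hWbot, Submodule.mem_bot] at hπx
      rw [← Submodule.Quotient.mk_eq_zero]
      simpa [hπ] using hπx
  have hopen : ∀ (t : Finset (Ideal B)), ↑t ⊆ S →
      IsOpen ((t.inf (fun I => I.restrictScalars k) : Submodule k B) : Set B) := by
    intro t
    induction t using Finset.induction_on with
    | empty => intro _; simpa using isOpen_univ
    | @insert a t ha ih =>
      intro hsub
      rw [Finset.inf_insert]
      rw [Submodule.coe_inf]
      exact IsOpen.inter (hsub (Finset.mem_insert_self a t)).1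
        (ih (Set.Subset.trans (by simp) hsub))
  rw [hJ]
  exact hopen s hsS

theorem aux_ker_max {A : Type} [Ring A] {k : Type} [Field k] [Algebra k A]
    (χ : A →ₐ[k] k) : (RingHom.ker (χ : A →+* k)).IsMaximal := by
  constructor
  constructor
  · intro h
    have h1 : (1 : A) ∈ RingHom.ker (χ : A →+* k) := h ▸ trivial
    rw [RingHom.mem_ker, map_one] at h1
    exact one_ne_zero h1
  · intro I hlt
    obtain ⟨x, hxI, hxk⟩ := SetLike.exists_of_lt hlt
    have hxk' : χ x ≠ 0 := by simpa [RingHom.mem_ker] using hxk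
    rw [eq_top_iff]
    intro y _
    have key : y - algebraMap k A (χ y * (χ x)⁻¹) * x ∈ RingHom.ker (χ : A →+* k) := by
      rw [RingHom.mem_ker, map_sub, map_mul]
      show χ y - χ ((algebraMap k A) (χ y * (χ x)⁻¹)) * χ x = 0
      rw [AlgHom.commutes]
      simp only [Algebra.algebraMap_self, RingHom.id_apply]
      rw [inv_mul_cancel_right₀ hxk', sub_self]
    have h1 : y - algebraMap k A (χ y * (χ x)⁻¹) * x ∈ I := le_of_lt hlt key
    have h2 : algebraMap k A (χ y * (χ x)⁻¹) * x ∈ I := I.mul_mem_left _ hxI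
    simpa using I.add_mem h1 h2

theorem aux_maps_Jrad
    (k : Type) [Field k]
    (A : Type) [Ring A] [Algebra k A] [TopologicalSpace A] [IsTopologicalRing A]
    (B : Type) [Ring B] [Algebra k B] [TopologicalSpace B] [IsTopologicalRing B]
    (hBp : IsPointed k B)
    (α : A →ₐ[k] B) (hαc : Continuous α) :
    ∀ a ∈ Jrad k A, α a ∈ Jrad k B := by
  obtain ⟨m, ψ, hψs, hψk⟩ := hBp
  intro a ha
  have : ψ (α a) = 0 := by
    funext i
    set χ : A →ₐ[k] k := (Pi.evalAlgHom k (fun _ => k) i).comp (ψ.comp α) with hχ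
    have hopen : IsOpen ((RingHom.ker (χ : A →+* k) : Ideal A) : Set A) := by
      set Mi : Submodule k B :=
        LinearMap.ker ((LinearMap.proj i).comp ψ.toLinearMap) with hMi
      have hJMi : Jrad k B ≤ Mi := by
        intro b hb
        have hb' : b ∈ RingHom.ker ψ := by rw [hψk]; exact hb
        rw [RingHom.mem_ker] at hb'
        have hbi : ψ b i = 0 := by simpa using congrFun hb' i
        simp [hMi, LinearMap.mem_ker, hbi]
      have hMiopen : IsOpen (Mi : Set B) :=
        Submodule.isOpen_mono hJMi (aux_isOpen_Jrad k B ⟨m, ψ, hψs, hψk⟩)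
      have hset : ((RingHom.ker (χ : A →+* k) : Ideal A) : Set A) = α ⁻¹' (Mi : Set B) := by
        ext y
        simp [RingHom.mem_ker, hχ, hMi, LinearMap.mem_ker]
      rw [hset]
      exact hMiopen.preimage hαc
    have hmem : RingHom.ker (χ : A →+* k) ∈
        {I : Ideal A | IsOpen (I : Set A) ∧ I.IsMaximal} := ⟨hopen, aux_ker_max χ⟩
    have hle : openJacobson A ≤ RingHom.ker (χ : A →+* k) := sInf_le hmem
    have : χ a = 0 := hle ha
    simpa [hχ] using this
  show α a ∈ (openJacobson B).restrictScalars k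
  rw [← hψk]
  exact this

theorem aux_Jpow_two_eq (k : Type) [Field k] (B : Type) [Ring B] [Algebra k B]
    [TopologicalSpace B] : Jpow k B 2 = Jrad k B * Jrad k B := rfl

theorem aux_Jpow_succ_succ (k : Type) [Field k] (B : Type) [Ring B] [Algebra k B]
    [TopologicalSpace B] (n : ℕ) :
    Jpow k B (n + 2) = Jrad k B * Jpow k B (n + 1) := rfl

theorem aux_mulJ2 (k : Type) [Field k] (B : Type) [Ring B] [Algebra k B]
    [TopologicalSpace B] {m : ℕ} {z w : B}
    (hz : z ∈ Jpow k B 2) (hw : w ∈ Jpow k B (m + 1)) :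
    z * w ∈ Jpow k B (m + 3) := by
  rw [aux_Jpow_two_eq] at hz
  refine Submodule.mul_induction_on (C := fun z => z * w ∈ Jpow k B (m + 3)) hz ?_ ?_
  · intro u hu v hv
    rw [mul_assoc]
    exact Submodule.mul_mem_mul hu (Submodule.mul_mem_mul hv hw)
  · intro z₁ z₂ h₁ h₂
    rw [add_mul]
    exact add_mem h₁ h₂

theorem aux_maps_Jpow
    (k : Type) [Field k]
    (A : Type) [Ring A] [Algebra k A] [TopologicalSpace A]
    (B : Type) [Ring B] [Algebra k B] [TopologicalSpace B]
    (α : A →ₐ[k] B) (hJ : ∀ a ∈ Jrad k A, α a ∈ Jrad k B) :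
    ∀ n : ℕ, ∀ a ∈ Jpow k A n, α a ∈ Jpow k B n := by
  intro n
  induction n with
  | zero => intro a _; exact Submodule.mem_top
  | succ n ih =>
    match n, ih with
    | 0, _ => exact hJ
    | m + 1, ih =>
      intro a ha
      rw [aux_Jpow_succ_succ] at ha
      refine Submodule.mul_induction_on (C := fun a => α a ∈ Jpow k B (m + 2)) ha ?_ ?_
      · intro x hx y hy
        rw [map_mul]
        exact Submodule.mul_mem_mul (hJ x hx) (ih y hy)
      · intro x y hx hy
        rw [map_add]
        exact add_mem hx hy

end AuxLemmas

/-- Let `A`, `B` be pointed pseudocompact `k`-algebras with `A/J²(A)`,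
`B/J²(B)` finite dimensional, and let `α, β : A → B` be continuous unital algebra
homomorphisms with `(α−β)(A) ⊆ J(B)` and `(α−β)(J(A)) ⊆ J²(B)`.  Then for every `n ≥ 1`,
`(α−β)(Jⁿ(A)) ⊆ J^{n+1}(B)`. -/
theorem diff_maps_Jpow_into_Jpow_succ
    (k : Type) [Field k] [PerfectField k]
    (A : Type) [Ring A] [Algebra k A] [UniformSpace A] [IsUniformAddGroup A] [IsTopologicalRing A]
    (B : Type) [Ring B] [Algebra k B] [UniformSpace B] [IsUniformAddGroup B] [IsTopologicalRing B]
    (hA : IsPseudocompactAlgebra k A) (hB : IsPseudocompactAlgebra k B)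
    (hAp : IsPointed k A) (hBp : IsPointed k B)
    (hAfd : FiniteDimensional k (A ⧸ Jpow k A 2))
    (hBfd : FiniteDimensional k (B ⧸ Jpow k B 2))
    (α β : A →ₐ[k] B) (hαc : Continuous α) (hβc : Continuous β)
    (h0 : ∀ a : A, α a - β a ∈ Jrad k B)
    (h1 : ∀ a ∈ Jrad k A, α a - β a ∈ Jpow k B 2) :
    ∀ n : ℕ, 1 ≤ n → ∀ a ∈ Jpow k A n, α a - β a ∈ Jpow k B (n + 1) := by
  
  have hαJ : ∀ a ∈ Jrad k A, α a ∈ Jrad k B := aux_maps_Jrad k A B hBp α hαc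
  have hβJ : ∀ a ∈ Jrad k A, β a ∈ Jrad k B := aux_maps_Jrad k A B hBp β hβc
  intro n hn
  induction n, hn using Nat.le_induction with
  | base => exact h1
  | succ n hn ih =>
    obtain ⟨m, rfl⟩ : ∃ m, n = m + 1 := ⟨n - 1, (Nat.succ_pred_eq_of_pos hn).symm⟩
    intro a ha
    rw [aux_Jpow_succ_succ] at ha
    refine Submodule.mul_induction_on
      (C := fun a => α a - β a ∈ Jpow k B (m + 3)) ha ?_ ?_
    · intro x hx y hy
      have e : α (x * y) - β (x * y) = (α x - β x) * α y + β x * (α y - β y) := by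
        rw [map_mul, map_mul]; noncomm_ring
      rw [e]
      refine add_mem ?_ ?_
      · exact aux_mulJ2 k B (h1 x hx) (aux_maps_Jpow k A B α hαJ (m + 1) y hy)
      · have h2 : β x * (α y - β y) ∈ Jrad k B * Jpow k B (m + 2) :=
          Submodule.mul_mem_mul (hβJ x hx) (ih y hy)
        rwa [← aux_Jpow_succ_succ] at h2
    · intro z w hz hw
      have e : α (z + w) - β (z + w) = (α z - β z) + (α w - β w) := by
        rw [map_add, map_add]; abel
      rw [e]
      exact add_mem hz hw
end

section
/- Let A be a pointed pseudocompact k-algebra with A/J²(A) finite dimensional, and let α : A → A be a continuous unital algebra endomorphism such that (α − id_A)(A) ⊆ J(A) and (α − id_A)(J(A)) ⊆ J²(A). Then α is an isomorphism. -/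
section Aux

variable (k : Type) [Field k] (A : Type) [Ring A] [Algebra k A] [TopologicalSpace A]

lemma jpow_succ : ∀ n : ℕ, 1 ≤ n → Jpow k A (n+1) = Jrad k A * Jpow k A n
  | _+1, _ => rfl

lemma jrad_mul_left {a x : A} (hx : x ∈ Jrad k A) : a * x ∈ Jrad k A :=
  Ideal.mul_mem_left _ a hx

lemma jpow_mul_left : ∀ n : ℕ, ∀ a x : A, x ∈ Jpow k A n → a * x ∈ Jpow k A n
  | 0, _, _, _ => trivial
  | 1, a, x, hx => jrad_mul_left k A hx
  | n + 2, a, x, hx => by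
    refine Submodule.mul_induction_on hx (fun m hm y hy => ?_) (fun y z hy hz => ?_)
    · rw [← mul_assoc]
      exact Submodule.mul_mem_mul (jrad_mul_left k A hm) hy
    · rw [mul_add]; exact add_mem hy hz

lemma jpow_succ_le : ∀ n : ℕ, Jpow k A (n+1) ≤ Jpow k A n
  | 0 => le_top
  | 1 => Submodule.mul_le.2 fun x hx y hy => jrad_mul_left k A hy
  | n + 2 => by
    rw [jpow_succ k A (n+2) (by omega), jpow_succ k A (n+1) (by omega)]
    exact Submodule.mul_le.2 fun x hx y hy => Submodule.mul_mem_mul hx (jpow_succ_le (n+1) hy)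

lemma jpow_le {m n : ℕ} (h : m ≤ n) : Jpow k A n ≤ Jpow k A m := by
  induction n with
  | zero => simp_all
  | succ n ih =>
    rcases Nat.eq_or_lt_of_le h with h'|h'
    · exact le_of_eq (by rw [h'])
    · exact le_trans (jpow_succ_le k A n) (ih (by omega))

lemma jpow_mul_le (a : ℕ) (ha : 1 ≤ a) (b : ℕ) (hb : 1 ≤ b) :
    Jpow k A a * Jpow k A b ≤ Jpow k A (a + b) := by
  induction a, ha using Nat.le_induction with
  | base =>
    rw [Nat.add_comm]
    exact le_of_eq (jpow_succ k A b hb).symm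
  | succ n hn ih =>
    rw [jpow_succ k A n hn, mul_assoc, show n+1+b = (n+b)+1 by omega,
      jpow_succ k A (n+b) (by omega)]
    exact Submodule.mul_le.2 fun x hx y hy => Submodule.mul_mem_mul hx (ih hy)

lemma claimC [IsTopologicalRing A] (P U : Ideal A) (hP : IsOpen (P : Set A)) (hPU : P ≤ U)
    (hmax : ∀ W : Ideal A, P ≤ W → W ≤ U → W = P ∨ W = U)
    {x u : A} (hx : x ∈ openJacobson A) (hu : u ∈ U) : x * u ∈ P := by
  by_cases hup : u ∈ P
  · exact Ideal.mul_mem_left P x hup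
  · set L : Ideal A := Submodule.comap (LinearMap.toSpanSingleton A A u) P with hLdef
    have hLmem : ∀ y : A, y ∈ L ↔ y * u ∈ P := fun y => by
      simp [hLdef, LinearMap.toSpanSingleton_apply, smul_eq_mul, Submodule.mem_comap]
    have hLopen : IsOpen (L : Set A) := by
      have : (L : Set A) = (fun y => y * u) ⁻¹' (P : Set A) := by
        ext y; simpa using hLmem y
      rw [this]
      exact hP.preimage (continuous_mul_right u)
    have hLmax : L.IsMaximal := by
      rw [Ideal.isMaximal_def]
      constructor
      · intro h
        have h1 : (1 : A) ∈ L := h ▸ Submodule.mem_top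
        exact hup (by simpa using (hLmem 1).1 h1)
      · intro L' hLL'
        obtain ⟨y', hy'L', hy'L⟩ := SetLike.exists_of_lt hLL'
        have hy'u : y' * u ∉ P := fun h => hy'L ((hLmem y').2 h)
        have hy'uU : y' * u ∈ U := Ideal.mul_mem_left U y' hu
        have hspan : Ideal.span {y' * u} ≤ U := by
          rwa [Ideal.span_le, Set.singleton_subset_iff]
        rcases hmax (P ⊔ Ideal.span {y' * u}) le_sup_left (sup_le hPU hspan) with hW | hW
        · have hmemW : y' * u ∈ P ⊔ Ideal.span {y' * u} :=
            Submodule.mem_sup_right (Ideal.subset_span rfl)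
          rw [hW] at hmemW
          exact absurd hmemW hy'u
        · have huW : u ∈ P ⊔ Ideal.span {y' * u} := hW ▸ hu
          obtain ⟨p, hp, q, hq, hpq⟩ := Submodule.mem_sup.1 huW
          obtain ⟨r, hr⟩ := Submodule.mem_span_singleton.1 hq
          have h1 : (1 - r * y') ∈ L := (hLmem _).2 (by
            have hcomp : (1 - r * y') * u = p := by
              rw [sub_mul, one_mul, mul_assoc,
                show r * (y' * u) = r • (y' * u) from rfl, hr, ← hpq, add_sub_cancel_right]
            rw [hcomp]; exact hp)
          have hone : (1 : A) ∈ L' := by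
            have := add_mem (hLL'.le h1) (Ideal.mul_mem_left L' r hy'L')
            simpa using this
          exact (Ideal.eq_top_iff_one L').2 hone
    have hxL : x ∈ L :=
      (sInf_le (show L ∈ {I : Ideal A | IsOpen (I : Set A) ∧ I.IsMaximal} from
        ⟨hLopen, hLmax⟩) : openJacobson A ≤ L) hx
    exact (hLmem x).1 hxL

/-- Build a left ideal from a `k`-submodule stable under left multiplication. -/
def toIdeal (p : Submodule k A) (h : ∀ a x : A, x ∈ p → a * x ∈ p) : Ideal A where
  carrier := p
  add_mem' := fun ha hb => p.add_mem ha hb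
  zero_mem' := p.zero_mem
  smul_mem' := fun a x hx => h a x hx

@[simp] lemma mem_toIdeal (p : Submodule k A) (h) (x : A) : x ∈ toIdeal k A p h ↔ x ∈ p :=
  Iff.rfl

set_option synthInstance.maxHeartbeats 1000000 in
set_option maxHeartbeats 1000000 in
lemma jpow_basis {k : Type} [Field k] {A : Type} [Ring A] [Algebra k A]
    [UniformSpace A] [IsUniformAddGroup A] [IsTopologicalRing A]
    (hA : IsPseudocompactAlgebra k A) :
    ∀ s ∈ nhds (0 : A), ∃ n : ℕ, 1 ≤ n ∧ (Jpow k A n : Set A) ⊆ s := by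
  intro s hs
  obtain ⟨I, -, hIopen, hIfd, hIs⟩ := hA.basis s hs
  haveI := hIfd
  set I' : Submodule k A := I.restrictScalars k with hI'def
  haveI : FiniteDimensional k (A ⧸ I') := hIfd
  set mk := I'.mkQ with hmkdef
  set f : ℕ → ℕ := fun n => Module.finrank k ((Jpow k A n ⊔ I').map mk) with hfdef
  have hfmono : ∀ n, f (n + 1) ≤ f n := fun n =>
    Submodule.finrank_mono (Submodule.map_mono (sup_le_sup_right (jpow_succ_le k A n) I'))
  -- the chain stabilises
  have hstab : ∃ N, 1 ≤ N ∧ f (N + 1) = f N := by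
    by_contra h
    push_neg at h
    have hdec : ∀ N, 1 ≤ N → f (N + 1) < f N := fun N hN =>
      lt_of_le_of_ne (hfmono N) (h N hN)
    have key : ∀ m : ℕ, f (m + 1) + m ≤ f 1 := by
      intro m
      induction m with
      | zero => simp [hdec]
      | succ m ih =>
        have := hdec (m + 1) (by omega)
        omega
    have := key (f 1 + 1)
    omega
  obtain ⟨N, hN1, hfN⟩ := hstab
  -- deduce the submodule equality
  have hVle : Jpow k A (N + 1) ⊔ I' ≤ Jpow k A N ⊔ I' :=
    sup_le_sup_right (jpow_succ_le k A N) I'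
  have hmapeq : (Jpow k A (N + 1) ⊔ I').map mk = (Jpow k A N ⊔ I').map mk :=
    Submodule.eq_of_le_of_finrank_le (Submodule.map_mono hVle) (le_of_eq hfN.symm)
  have hcomap : ∀ V : Submodule k A, I' ≤ V → Submodule.comap mk (V.map mk) = V := by
    intro V hIV
    rw [hmkdef, Submodule.comap_map_eq, Submodule.ker_mkQ, sup_eq_left.2 hIV]
  have hVeq : Jpow k A (N + 1) ⊔ I' = Jpow k A N ⊔ I' := by
    rw [← hcomap _ le_sup_right, hmapeq, hcomap _ le_sup_right]
  -- now show `Jpow N ≤ I'`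
  suffices hfin : Jpow k A N ≤ I' by
    exact ⟨N, hN1, fun x hx => hIs (hfin hx)⟩
  by_contra hnle
  obtain ⟨v, hv, hvI⟩ := SetLike.not_le_iff_exists.1 hnle
  -- the ideal `Jpow N + I`
  have hstabJ : ∀ a x : A, x ∈ Jpow k A N ⊔ I' → a * x ∈ Jpow k A N ⊔ I' := by
    intro a x hx
    obtain ⟨y, hy, z, hz, rfl⟩ := Submodule.mem_sup.1 hx
    rw [mul_add]
    exact Submodule.add_mem_sup (jpow_mul_left k A N a y hy) (Ideal.mul_mem_left I a hz)
  set UI : Ideal A := toIdeal k A (Jpow k A N ⊔ I') hstabJ with hUIdef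
  have hIUI : I ≤ UI := fun x hx => Submodule.mem_sup_right hx
  have hIltUI : I < UI := lt_of_le_of_ne hIUI (by
    intro h
    exact hvI (by
      have : v ∈ UI := Submodule.mem_sup_left hv
      rw [← h] at this
      exact this))
  -- choose a maximal intermediate left ideal `P`
  set T : Set ℕ := {d : ℕ | ∃ W : Ideal A, I ≤ W ∧ W < UI ∧
    d = Module.finrank k ((W.restrictScalars k).map mk)} with hTdef
  have hTne : T.Nonempty := ⟨_, I, le_refl I, hIltUI, rfl⟩
  have hTbdd : BddAbove T := by
    refine ⟨Module.finrank k (A ⧸ I'), ?_⟩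
    rintro d ⟨W, -, -, rfl⟩
    exact Submodule.finrank_le _
  obtain ⟨P, hIP, hPUI, hPrank⟩ := Nat.sSup_mem hTne hTbdd
  have hPopen : IsOpen (P : Set A) :=
    AddSubgroup.isOpen_mono (H₁ := Submodule.toAddSubgroup I)
      (H₂ := Submodule.toAddSubgroup P) hIP hIopen
  have hmax : ∀ W : Ideal A, P ≤ W → W ≤ UI → W = P ∨ W = UI := by
    intro W hPW hWU
    by_cases hWne : W = UI
    · exact Or.inr hWne
    · left
      have hWlt : W < UI := lt_of_le_of_ne hWU hWne
      have hWmem : Module.finrank k ((W.restrictScalars k).map mk) ∈ T :=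
        ⟨W, hIP.trans hPW, hWlt, rfl⟩
      have h1 : Module.finrank k ((W.restrictScalars k).map mk) ≤
          Module.finrank k ((P.restrictScalars k).map mk) :=
        hPrank ▸ le_csSup hTbdd hWmem
      have h2 : (P.restrictScalars k).map mk ≤ (W.restrictScalars k).map mk :=
        Submodule.map_mono (fun x hx => hPW hx)
      have hmeq := Submodule.eq_of_le_of_finrank_le h2 h1
      have hIle : ∀ (W' : Ideal A), I ≤ W' → I' ≤ W'.restrictScalars k :=
        fun W' hIW' x hx => hIW' hx
      have : W.restrictScalars k = P.restrictScalars k := by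
        rw [← hcomap _ (hIle W (hIP.trans hPW)), ← hcomap _ (hIle P hIP), hmeq]
      exact Submodule.restrictScalars_injective k A A this
  -- `J · UI ≤ P` by the key maximality lemma
  have hJUI : ∀ x ∈ Jrad k A, ∀ u ∈ UI, x * u ∈ P := fun x hx u hu =>
    claimC A P UI hPopen hPUI.le hmax hx hu
  have hkey : Jpow k A (N + 1) ≤ P.restrictScalars k := by
    rw [jpow_succ k A N hN1]
    exact Submodule.mul_le.2 fun x hx y hy => hJUI x hx y (Submodule.mem_sup_left hy)
  have hNsub : Jpow k A N ≤ P.restrictScalars k := by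
    intro y hy
    have h1 : y ∈ Jpow k A (N + 1) ⊔ I' := hVeq.ge (Submodule.mem_sup_left hy)
    obtain ⟨a, ha, b, hb, rfl⟩ := Submodule.mem_sup.1 h1
    exact add_mem (hkey ha) (hIP hb)
  have hUIP : UI ≤ P := by
    intro x hx
    obtain ⟨a, ha, b, hb, rfl⟩ :=
      Submodule.mem_sup.1 (show x ∈ Jpow k A N ⊔ I' from hx)
    exact add_mem (hNsub ha) (hIP hb)
  exact absurd hUIP (not_le_of_gt hPUI)

lemma jpow_one : Jpow k A 1 = Jrad k A := rfl

theorem main_thm {k : Type} [Field k] {A : Type} [Ring A] [Algebra k A]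
    [UniformSpace A] [IsUniformAddGroup A] [IsTopologicalRing A]
    (hA : IsPseudocompactAlgebra k A)
    (α : A →ₐ[k] A) (hαc : Continuous α)
    (h0 : ∀ a : A, α a - a ∈ Jrad k A)
    (h1 : ∀ a ∈ Jrad k A, α a - a ∈ Jpow k A 2) :
    ∃ β : A →ₐ[k] A, Continuous β ∧
      β.comp α = AlgHom.id k A ∧ α.comp β = AlgHom.id k A := by
  haveI := hA.t2
  haveI := hA.complete
  set δ : Module.End k A := (α.toLinearMap - LinearMap.id) with hδdef
  have hδ : ∀ a, δ a = α a - a := fun a => rfl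
  have hδc : Continuous δ := by
    have : ⇑δ = fun a => α a - a := rfl
    rw [this]; exact hαc.sub continuous_id
  -- δ maps Jpow (n+1) into Jpow (n+2)
  have hδmap : ∀ n : ℕ, ∀ x ∈ Jpow k A (n+1), δ x ∈ Jpow k A (n+2) := by
    intro n
    induction n with
    | zero => intro x hx; exact h1 x hx
    | succ n ih =>
      intro x hx
      refine Submodule.mul_induction_on hx (fun m hm y hy => ?_) (fun y z hy hz => ?_)
      · have hcalc : δ (m * y) = m * δ y + δ m * y + δ m * δ y := by
          have h2 : α m = m + δ m := by rw [hδ]; abel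
          have h3 : α y = y + δ y := by rw [hδ]; abel
          rw [hδ, map_mul, h2, h3]; noncomm_ring
        rw [hcalc]
        refine add_mem (add_mem ?_ ?_) ?_
        · show m * δ y ∈ Jpow k A (n+1+2)
          exact Submodule.mul_mem_mul hm (ih y hy)
        · have h4 := jpow_mul_le k A 2 (by omega) (n+1) (by omega)
            (Submodule.mul_mem_mul (h1 m hm) hy)
          rw [show n+1+2 = 2+(n+1) from by omega]
          exact h4
        · have h4 := jpow_mul_le k A 2 (by omega) (n+2) (by omega)
            (Submodule.mul_mem_mul (h1 m hm) (ih y hy))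
          exact jpow_le k A (show n+1+2 ≤ 2+(n+2) from by omega) h4
      · rw [map_add]; exact add_mem hy hz
  -- powers of δ
  have hδpow : ∀ m : ℕ, 1 ≤ m → ∀ b : A, (δ ^ m) b ∈ Jpow k A m := by
    intro m hm
    induction m, hm using Nat.le_induction with
    | base => intro b; rw [pow_one]; exact h0 b
    | succ n hn ih =>
      intro b
      obtain ⟨p, rfl⟩ : ∃ p, n = p + 1 := ⟨n - 1, by omega⟩
      have h4 : (δ ^ (p + 1 + 1)) b = δ ((δ ^ (p + 1)) b) := by rw [pow_succ']; rfl
      rw [h4]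
      exact hδmap p _ (ih b)
  set S : A → ℕ → A := fun b N => ∑ m ∈ Finset.range N, ((-1:ℤ)^m) • ((δ ^ m) b) with hSdef
  have htail : ∀ b : A, ∀ N, 1 ≤ N → ∀ p, N ≤ p → S b p - S b N ∈ Jpow k A N := by
    intro b N hN p hp
    rw [show S b p - S b N = ∑ m ∈ Finset.Ico N p, ((-1:ℤ)^m) • ((δ ^ m) b) from
      (Finset.sum_Ico_eq_sub _ hp).symm]
    refine Submodule.sum_mem _ fun m hm => ?_
    have hm' := Finset.mem_Ico.1 hm
    have h5 : (δ ^ m) b ∈ Jpow k A m := hδpow m (by omega) b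
    have h6 : (δ ^ m) b ∈ Jpow k A N := jpow_le k A (by omega) h5
    exact AddSubgroup.zsmul_mem (Jpow k A N).toAddSubgroup h6 _
  have hcauchy : ∀ b : A, CauchySeq (S b) := by
    intro b
    rw [cauchySeq_iff]
    intro V hV
    rw [uniformity_eq_comap_nhds_zero A] at hV
    obtain ⟨t, ht, htV⟩ := Filter.mem_comap.1 hV
    obtain ⟨n, hn1, hns⟩ := jpow_basis hA t ht
    refine ⟨n, fun p hp q hq => htV ?_⟩
    show (S b q - S b p) ∈ t
    have h7 : S b q - S b p = (S b q - S b n) - (S b p - S b n) := by abel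
    rw [h7]
    exact hns (sub_mem (htail b n hn1 q hq) (htail b n hn1 p hp))
  have hlim : ∀ b : A, ∃ a : A, Filter.Tendsto (S b) Filter.atTop (nhds a) := fun b =>
    cauchySeq_tendsto_of_complete (hcauchy b)
  have hαS : ∀ (b : A) (N : ℕ), α (S b N) = b - ((-1:ℤ)^N) • ((δ ^ N) b) := by
    intro b N
    induction N with
    | zero => simp [hSdef]
    | succ N ih =>
      have hsum : S b (N+1) = S b N + ((-1:ℤ)^N) • ((δ ^ N) b) := Finset.sum_range_succ _ _
      rw [hsum, map_add, ih, map_zsmul]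
      have hα : α ((δ ^ N) b) = (δ ^ N) b + (δ ^ (N+1)) b := by
        have h8 : (δ ^ (N+1)) b = δ ((δ ^ N) b) := by rw [pow_succ']; rfl
        rw [h8, hδ]; abel
      rw [hα, smul_add]
      have h9 : ((-1:ℤ)^(N+1)) • ((δ ^ (N+1)) b) = -(((-1:ℤ)^N) • ((δ ^ (N+1)) b)) := by
        rw [pow_succ, mul_smul, neg_one_zsmul, smul_neg]
      rw [h9]; abel
  have hRHδ : ∀ b : A, Filter.Tendsto (fun N => ((-1:ℤ)^N) • ((δ ^ N) b))
      Filter.atTop (nhds 0) := by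
    intro b
    rw [Filter.tendsto_def]
    intro s hs
    obtain ⟨n, hn1, hns⟩ := jpow_basis hA s hs
    refine Filter.mem_of_superset (Filter.Ici_mem_atTop n) fun N hN => ?_
    have hN' : n ≤ N := hN
    show ((-1:ℤ)^N) • ((δ ^ N) b) ∈ s
    exact hns (AddSubgroup.zsmul_mem (Jpow k A n).toAddSubgroup
      (jpow_le k A hN' (hδpow N (by omega) b)) _)
  have hαlim : ∀ b a : A, Filter.Tendsto (S b) Filter.atTop (nhds a) → α a = b := by
    intro b a h
    have h9 : Filter.Tendsto (fun N => α (S b N)) Filter.atTop (nhds (α a)) :=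
      (hαc.tendsto a).comp h
    have h10 : Filter.Tendsto (fun N => α (S b N)) Filter.atTop (nhds b) := by
      simp only [hαS b]
      simpa using Filter.Tendsto.const_sub b (hRHδ b)
    exact tendsto_nhds_unique h9 h10
  have hinj : Function.Injective α := by
    intro x y hxy
    set c := x - y with hcdef
    have hc : α c = 0 := by rw [hcdef, map_sub, hxy, sub_self]
    have hall : ∀ n, 1 ≤ n → c ∈ Jpow k A n := by
      intro n hn
      induction n, hn using Nat.le_induction with
      | base =>
        have h11 : -c ∈ Jrad k A := by
          have := h0 c
          rw [hc, zero_sub] at this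
          exact this
        exact (by simpa using neg_mem h11 : c ∈ Jrad k A)
      | succ n hn ih =>
        obtain ⟨p, rfl⟩ : ∃ p, n = p + 1 := ⟨n - 1, by omega⟩
        have h11 : δ c ∈ Jpow k A (p+2) := hδmap p c ih
        have h12 : δ c = -c := by rw [hδ, hc, zero_sub]
        have h13 := neg_mem h11
        rw [h12, neg_neg] at h13
        exact h13
    have hc0 : c = 0 := by
      by_contra hne
      have hopen : IsOpen {y : A | y ≠ c} := isOpen_compl_singleton
      have hmem : (0:A) ∈ {y : A | y ≠ c} := fun h => hne h.symm
      obtain ⟨n, hn1, hns⟩ := jpow_basis hA _ (hopen.mem_nhds hmem)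
      exact (hns (hall n hn1)) rfl
    rw [← sub_eq_zero]
    exact hc0
  have hsurj : Function.Surjective α := fun b => by
    obtain ⟨a, ha⟩ := hlim b
    exact ⟨a, hαlim b a ha⟩
  set e := AlgEquiv.ofBijective α ⟨hinj, hsurj⟩ with hedef
  have hea : ∀ a : A, e a = α a := fun a => rfl
  have hβS : ∀ b, Filter.Tendsto (S b) Filter.atTop (nhds (e.symm b)) := by
    intro b
    obtain ⟨a, ha⟩ := hlim b
    have h13 : e.symm b = a := by
      rw [← hαlim b a ha, ← hea, e.symm_apply_apply]
    rw [h13]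
    exact ha
  have hβcont : Continuous (e.symm.toAlgHom : A →ₐ[k] A) := by
    refine continuous_of_continuousAt_zero e.symm.toAlgHom ?_
    rw [ContinuousAt, map_zero, Filter.tendsto_def]
    intro s hs
    obtain ⟨I, -, hIopen, -, hIs⟩ := hA.basis s hs
    obtain ⟨n, hn1, hns⟩ := jpow_basis hA I (hIopen.mem_nhds I.zero_mem)
    have hIclosed : IsClosed (I : Set A) :=
      AddSubgroup.isClosed_of_isOpen I.toAddSubgroup hIopen
    set g : A → A := fun b => S b n with hgdef
    have hcontpow : ∀ m : ℕ, Continuous fun b : A => (δ ^ m) b := by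
      intro m; induction m with
      | zero => simpa [pow_zero] using continuous_id'
      | succ m ih =>
        have h14 : (fun b : A => (δ ^ (m+1)) b) = fun b => δ ((δ ^ m) b) := by
          funext b; rw [pow_succ']; rfl
        rw [h14]; exact hδc.comp ih
    have hgc : Continuous g := by
      refine continuous_finset_sum _ fun m _ => ?_
      exact (continuous_zsmul ((-1:ℤ)^m)).comp (hcontpow m)
    have hest : ∀ b, e.symm b - g b ∈ (I : Set A) := by
      intro b
      have h14 : Filter.Tendsto (fun N => S b N - g b) Filter.atTop
          (nhds (e.symm b - g b)) := (hβS b).sub_const _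
      refine hIclosed.mem_of_tendsto h14 ?_
      filter_upwards [Filter.eventually_ge_atTop n] with N hN
      exact hns (htail b n hn1 N hN)
    have hg0 : g 0 = 0 := by simp [hgdef, hSdef]
    have hU : g ⁻¹' (I : Set A) ∈ nhds (0 : A) := by
      have := hgc.continuousAt (x := (0:A))
      refine this.preimage_mem_nhds ?_
      rw [hg0]
      exact hIopen.mem_nhds I.zero_mem
    refine Filter.mem_of_superset hU fun b hb => ?_
    show e.symm.toAlgHom b ∈ s
    apply hIs
    have h15 := I.add_mem (show e.symm b - g b ∈ I from hest b) (show g b ∈ I from hb)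
    simpa using h15
  refine ⟨e.symm.toAlgHom, hβcont, ?_, ?_⟩
  · exact AlgHom.ext fun a => e.symm_apply_apply a
  · exact AlgHom.ext fun a => e.apply_symm_apply a

end Aux

/-- Let `A` be a pointed pseudocompact `k`-algebra with `A/J²(A)` finite
dimensional and `α : A → A` a continuous unital algebra endomorphism with
`(α − id)(A) ⊆ J(A)` and `(α − id)(J(A)) ⊆ J²(A)`.  Then `α` is an isomorphism (in the
category of pseudocompact algebras with continuous homomorphisms: it has a continuous
two-sided inverse). -/
theorem close_to_id_is_isomorphism
    (k : Type) [Field k] [PerfectField k]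
    (A : Type) [Ring A] [Algebra k A] [UniformSpace A] [IsUniformAddGroup A] [IsTopologicalRing A]
    (hA : IsPseudocompactAlgebra k A) (hAp : IsPointed k A)
    (hfd : FiniteDimensional k (A ⧸ Jpow k A 2))
    (α : A →ₐ[k] A) (hαc : Continuous α)
    (h0 : ∀ a : A, α a - a ∈ Jrad k A)
    (h1 : ∀ a ∈ Jrad k A, α a - a ∈ Jpow k A 2) :
    ∃ β : A →ₐ[k] A, Continuous β ∧
      β.comp α = AlgHom.id k A ∧ α.comp β = AlgHom.id k A := by
  exact main_thm hA α hαc h0 h1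
end

section
/- Let A be a pointed pseudocompact k-algebra with A/J²(A) finite dimensional. Let P be the unique complete set of primitive orthogonal idempotents of A/J(A) ≅ ∏ k. Then the map Ω sending an algebra splitting s of the canonical projection A → A/J(A) to the set s(P) is a bijection from the set of such splittings onto the set of complete sets of primitive orthogonal idempotents of A. -/
/-- A *complete set of primitive orthogonal idempotents*: a finite set of non-zero,
pairwise orthogonal, primitive idempotents summing to `1`. -/
def IsCompleteOrthSet {A : Type} [Ring A] (E : Finset A) : Prop :=
  (∀ e ∈ E, IsPrimitiveIdempotent e ∧ e ≠ 0) ∧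
  (∀ e ∈ E, ∀ f ∈ E, e ≠ f → e * f = 0 ∧ f * e = 0) ∧
  (∑ e ∈ E, e) = 1

/-! ### Auxiliary lemmas -/

section Aux

open Polynomial

variable {k : Type} [Field k] {A : Type} [Ring A] [Algebra k A]

/-- Any nonzero polynomial factors as `X ^ d * q` with `q.coeff 0 ≠ 0`. -/
private lemma aux_strip_aux : ∀ (N : ℕ) (P : Polynomial k), P.natDegree ≤ N → P ≠ 0 →
    ∃ d q, Polynomial.coeff q 0 ≠ 0 ∧ P = Polynomial.X ^ d * q := by
  intro N
  induction N with
  | zero =>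
    intro P hd hP
    refine ⟨0, P, ?_, by rw [pow_zero, one_mul]⟩
    intro h0
    exact hP (by rw [Polynomial.eq_C_of_natDegree_le_zero hd, h0, map_zero])
  | succ N ih =>
    intro P hd hP
    by_cases h0 : P.coeff 0 = 0
    · obtain ⟨q, hq⟩ := Polynomial.X_dvd_iff.mpr h0
      have hq0 : q ≠ 0 := by rintro rfl; rw [mul_zero] at hq; exact hP hq
      have hdeg : q.natDegree ≤ N := by
        have h1 : P.natDegree = 1 + q.natDegree := by
          rw [hq, Polynomial.natDegree_mul Polynomial.X_ne_zero hq0, Polynomial.natDegree_X]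
        omega
      obtain ⟨d, r, hr, hqr⟩ := ih q hdeg hq0
      exact ⟨d + 1, r, hr, by rw [hq, hqr, pow_succ]; ring⟩
    · exact ⟨0, P, h0, by rw [pow_zero, one_mul]⟩

private lemma aux_strip (P : Polynomial k) (hP : P ≠ 0) :
    ∃ d q, Polynomial.coeff q 0 ≠ 0 ∧ P = Polynomial.X ^ d * q :=
  aux_strip_aux P.natDegree P le_rfl hP

variable [UniformSpace A] [IsUniformAddGroup A] [IsTopologicalRing A]

/-- For `u` in the open Jacobson radical and `I` an open ideal, `1 - u` is left
invertible modulo `I`. -/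
private lemma aux_quasi_reg (u : A) (hu : u ∈ openJacobson A) (I : Ideal A)
    (hIopen : IsOpen (I : Set A)) : ∃ w : A, w * (1 - u) - 1 ∈ I := by
  have hK : Ideal.span {1 - u} ⊔ I = ⊤ := by
    by_contra hK
    obtain ⟨M, hM, hle⟩ := Ideal.exists_le_maximal _ hK
    have hIM : I ≤ M := le_trans le_sup_right hle
    have hMopen : IsOpen (M : Set A) :=
      AddSubgroup.isOpen_mono (H₁ := I.toAddSubgroup) (H₂ := M.toAddSubgroup) hIM hIopen
    have huM : u ∈ M := (sInf_le ⟨hMopen, hM⟩ : openJacobson A ≤ M) hu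
    have h1M : (1 : A) - u ∈ M :=
      le_trans le_sup_left hle (Ideal.subset_span (Set.mem_singleton _))
    have hone : (1 : A) ∈ M := by
      have := M.add_mem h1M huM
      rwa [sub_add_cancel] at this
    exact hM.ne_top ((Ideal.eq_top_iff_one M).mpr hone)
  have h1 : (1 : A) ∈ Ideal.span {1 - u} ⊔ I := by rw [hK]; trivial
  obtain ⟨y, hy, z, hz, hyz⟩ := Submodule.mem_sup.mp h1
  obtain ⟨w, hw⟩ := Submodule.mem_span_singleton.mp hy
  refine ⟨w, ?_⟩
  have : w * (1 - u) - 1 = -z := by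
    rw [show w * (1 - u) = y from by rw [← hw, smul_eq_mul], ← hyz]; abel
  rw [this]
  exact I.neg_mem hz

/-- Elements of the open Jacobson radical are topologically nilpotent relative to any
open two-sided ideal of finite codimension. -/
private lemma aux_topnilp (c : A) (hc : c ∈ openJacobson A) (I : Ideal A)
    (htwo : ∀ x ∈ I, ∀ b : A, x * b ∈ I) (hIopen : IsOpen (I : Set A))
    (hfdI : FiniteDimensional k (A ⧸ I.restrictScalars k)) : ∃ d, c ^ d ∈ I := by
  haveI := hfdI
  -- the powers of `c` are linearly dependent modulo `I`
  set v : ℕ → A ⧸ I.restrictScalars k := fun m => Submodule.Quotient.mk (c ^ m) with hv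
  have hnli : ¬ LinearIndependent k v := Module.Finite.not_linearIndependent_of_infinite v
  rw [linearIndependent_iff'] at hnli
  push_neg at hnli
  obtain ⟨s, g, hrel, j, hjs, hgj⟩ := hnli
  -- build the corresponding polynomial
  set P : Polynomial k := ∑ i ∈ s, Polynomial.monomial i (g i) with hP
  have hPne : P ≠ 0 := by
    intro h0
    have hco : P.coeff j = g j := by
      rw [hP, Polynomial.finset_sum_coeff]
      rw [Finset.sum_eq_single j (fun b _ hb => by
        rw [Polynomial.coeff_monomial, if_neg hb]) (fun h => absurd hjs h)]
      rw [Polynomial.coeff_monomial, if_pos rfl]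
    rw [h0] at hco
    exact hgj (by simpa using hco.symm)
  have hPI : Polynomial.aeval c P ∈ I := by
    have hmk : Submodule.Quotient.mk (p := I.restrictScalars k) (Polynomial.aeval c P) = 0 := by
      have : Polynomial.aeval c P = ∑ i ∈ s, g i • c ^ i := by
        rw [hP, map_sum]
        refine Finset.sum_congr rfl fun i _ => ?_
        rw [Polynomial.aeval_monomial, Algebra.smul_def]
      rw [this, ← hrel, ← Submodule.mkQ_apply, map_sum]
      rfl
    exact (Submodule.Quotient.mk_eq_zero _).mp hmk
  obtain ⟨d, q, hq0, hPd⟩ := aux_strip P hPne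
  refine ⟨d, ?_⟩
  set lam : k := q.coeff 0 with hlam
  -- `aeval c q = lam • (1 - u)` with `u ∈ J`
  have hXdvd : Polynomial.X ∣ q - Polynomial.C lam := by
    rw [Polynomial.X_dvd_iff]
    simp [hlam]
  obtain ⟨r, hr⟩ := hXdvd
  have hu'J : Polynomial.aeval c (q - Polynomial.C lam) ∈ openJacobson A := by
    rw [hr, mul_comm, map_mul, Polynomial.aeval_X]
    exact Ideal.mul_mem_left _ _ hc
  set u : A := (-lam⁻¹) • Polynomial.aeval c (q - Polynomial.C lam) with hu
  have huJ : u ∈ openJacobson A := by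
    rw [hu, Algebra.smul_def]
    exact Ideal.mul_mem_left _ _ hu'J
  have hqc : Polynomial.aeval c q = lam • ((1 : A) - u) := by
    have h1 : Polynomial.aeval c q
        = algebraMap k A lam + Polynomial.aeval c (q - Polynomial.C lam) := by
      rw [← Polynomial.aeval_C (R := k) (x := c) lam, ← map_add]
      congr 1; ring
    rw [h1, hu, smul_sub, smul_smul]
    have hlamne : lam ≠ 0 := hq0
    rw [mul_neg, mul_inv_cancel₀ hlamne, neg_smul, sub_neg_eq_add, one_smul, Algebra.smul_def,
      mul_one]
  have hkey : c ^ d * (1 - u) ∈ I := by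
    have h1 : Polynomial.aeval c P = c ^ d * (lam • ((1 : A) - u)) := by
      rw [hPd, map_mul, map_pow, Polynomial.aeval_X, hqc]
    have h2 : c ^ d * ((1 : A) - u) = lam⁻¹ • Polynomial.aeval c P := by
      rw [h1, mul_smul_comm, smul_smul, inv_mul_cancel₀ hq0, one_smul]
    rw [h2, Algebra.smul_def]
    exact Ideal.mul_mem_left _ _ hPI
  obtain ⟨w, hw⟩ := aux_quasi_reg u huJ I hIopen
  -- `u` commutes with `c`
  have hcomm : ∀ p : Polynomial k, c * Polynomial.aeval c p = Polynomial.aeval c p * c := by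
    intro p
    have h1 : c * Polynomial.aeval c p = Polynomial.aeval c (Polynomial.X * p) := by
      rw [map_mul, Polynomial.aeval_X]
    have h2 : Polynomial.aeval c p * c = Polynomial.aeval c (p * Polynomial.X) := by
      rw [map_mul, Polynomial.aeval_X]
    rw [h1, h2, mul_comm]
  have hcu : Commute c u := by
    rw [hu]
    exact Commute.smul_right (hcomm _) _
  have hcdu : Commute (c ^ d) ((1 : A) - u) :=
    ((Commute.one_right (c ^ d)).sub_right (hcu.pow_left d))
  have hmem1 : w * ((1 - u) * c ^ d) ∈ I := by
    rw [← hcdu.eq]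
    exact Ideal.mul_mem_left _ _ hkey
  have hmem2 : (w * (1 - u) - 1) * c ^ d ∈ I := htwo _ hw _
  have : c ^ d = w * ((1 - u) * c ^ d) - (w * (1 - u) - 1) * c ^ d := by noncomm_ring
  rw [this]
  exact I.sub_mem hmem1 hmem2

/-- An idempotent in the open Jacobson radical of a pseudocompact algebra is zero. -/
private lemma aux_idem_zero (hA : IsPseudocompactAlgebra k A) (f : A)
    (hf : IsIdempotentElem f) (hfJ : f ∈ openJacobson A) : f = 0 := by
  haveI := hA.t2
  by_contra hne
  obtain ⟨U, V, hU, hV, hfU, h0V, hUV⟩ := t2_separation hne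
  obtain ⟨I, htwo, hIopen, hIfd, hIV⟩ := hA.basis V (hV.mem_nhds h0V)
  obtain ⟨d, hd⟩ := aux_topnilp f hfJ I htwo hIopen hIfd
  have hfI : f ∈ I := by
    have h1 : f ^ (d + 1) ∈ I := by
      rw [pow_succ]
      exact htwo _ hd f
    rwa [hf.pow_succ_eq d] at h1
  exact Set.disjoint_left.mp hUV hfU (hIV hfI)

/-- The open Jacobson radical is closed. -/
private lemma aux_J_closed : IsClosed ((openJacobson A : Ideal A) : Set A) := by
  have h : ((openJacobson A : Ideal A) : Set A)
      = ⋂ I ∈ {I : Ideal A | IsOpen (I : Set A) ∧ I.IsMaximal}, (I : Set A) := by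
    rw [openJacobson]
    exact Submodule.coe_sInf _
  rw [h]
  exact isClosed_biInter fun I hI => AddSubgroup.isClosed_of_isOpen I.toAddSubgroup hI.1

end Aux

/-- The Newton-type iteration `x ↦ 3x² - 2x³` at the level of polynomials. -/
private noncomputable def iterPoly (k : Type) [Field k] : ℕ → Polynomial k
  | 0 => Polynomial.X
  | m + 1 => 3 * (iterPoly k m) ^ 2 - 2 * (iterPoly k m) ^ 3

section Lift

open Polynomial

variable {k : Type} [Field k] {A : Type} [Ring A] [Algebra k A]
variable [UniformSpace A] [IsUniformAddGroup A] [IsTopologicalRing A]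

private lemma iterPoly_zero : iterPoly k 0 = Polynomial.X := by rw [iterPoly]

private lemma iterPoly_succ (m : ℕ) :
    iterPoly k (m + 1) = 3 * (iterPoly k m) ^ 2 - 2 * (iterPoly k m) ^ 3 := by
  rw [iterPoly]

private lemma iterPoly_key (m : ℕ) : ∃ Q : Polynomial k,
    (iterPoly k m) ^ 2 - iterPoly k m = (Polynomial.X ^ 2 - Polynomial.X) ^ (2 ^ m) * Q := by
  induction m with
  | zero => exact ⟨1, by rw [iterPoly_zero]; ring⟩
  | succ m ih =>
    obtain ⟨Q, hQ⟩ := ih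
    refine ⟨(4 * ((iterPoly k m) ^ 2 - iterPoly k m) - 3) * Q ^ 2, ?_⟩
    have hid : (iterPoly k (m + 1)) ^ 2 - iterPoly k (m + 1)
        = ((iterPoly k m) ^ 2 - iterPoly k m) ^ 2
          * (4 * ((iterPoly k m) ^ 2 - iterPoly k m) - 3) := by
      rw [iterPoly_succ]
      ring
    have hp : ((Polynomial.X ^ 2 - Polynomial.X : Polynomial k)) ^ (2 ^ (m + 1))
        = (((Polynomial.X ^ 2 - Polynomial.X : Polynomial k)) ^ (2 ^ m)) ^ 2 := by
      rw [pow_succ 2 m, pow_mul]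
    rw [hid, hQ, hp]
    ring

private lemma iterPoly_diff (m : ℕ) :
    iterPoly k (m + 1) - iterPoly k m
      = ((iterPoly k m) ^ 2 - iterPoly k m) * (1 - 2 * iterPoly k m) := by
  rw [iterPoly_succ]
  ring

private lemma iterPoly_cube (m : ℕ) :
    iterPoly k (m + 1)
      = iterPoly k m * iterPoly k m + iterPoly k m * iterPoly k m
        + iterPoly k m * iterPoly k m
        - (iterPoly k m * (iterPoly k m * iterPoly k m)
            + iterPoly k m * (iterPoly k m * iterPoly k m)) := by
  rw [iterPoly_succ]
  ring

/-- Idempotent lifting: given `a` with `a² - a ∈ J` and an idempotent `f` with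
`f a = a f = a`, there is an idempotent `e ∈ f A f` with `e ≡ a mod J`. -/
private lemma aux_lift (hA : IsPseudocompactAlgebra k A)
    (hJtwo : ∀ x ∈ openJacobson A, ∀ b : A, x * b ∈ openJacobson A)
    (a f : A) (ha : a * a - a ∈ openJacobson A) (hf : IsIdempotentElem f)
    (hfa : f * a = a) (haf : a * f = a) :
    ∃ e : A, IsIdempotentElem e ∧ e - a ∈ openJacobson A ∧ f * e = e ∧ e * f = e := by
  haveI := hA.t2
  haveI := hA.complete
  set c : A := a * a - a with hc
  set u : ℕ → A := fun m => Polynomial.aeval a (iterPoly k m) with hu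
  have hu0 : u 0 = a := by
    rw [hu]
    show Polynomial.aeval a (iterPoly k 0) = a
    rw [iterPoly_zero, Polynomial.aeval_X]
  -- squares defect
  have hsq : ∀ m, ∃ z, u m * u m - u m = c ^ (2 ^ m) * z := by
    intro m
    obtain ⟨Q, hQ⟩ := iterPoly_key (k := k) m
    refine ⟨Polynomial.aeval a Q, ?_⟩
    have h1 : u m * u m - u m = Polynomial.aeval a ((iterPoly k m) ^ 2 - iterPoly k m) := by
      rw [map_sub, map_pow, hu]; ring_nf
      rw [sq]
    have h2 : Polynomial.aeval a ((Polynomial.X ^ 2 - Polynomial.X : Polynomial k))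
        = c := by
      rw [map_sub, map_pow, Polynomial.aeval_X, hc, sq]
    rw [h1, hQ, map_mul, map_pow, h2]
  -- successive differences
  have hdiff : ∀ m, ∃ z, u (m + 1) - u m = (u m * u m - u m) * z := by
    intro m
    refine ⟨Polynomial.aeval a (1 - 2 * iterPoly k m), ?_⟩
    have h1 : u (m + 1) - u m
        = Polynomial.aeval a (iterPoly k (m + 1) - iterPoly k m) := by
      rw [map_sub]
    have h2 : u m * u m - u m
        = Polynomial.aeval a ((iterPoly k m) ^ 2 - iterPoly k m) := by
      rw [map_sub, map_pow, sq]
    rw [h1, h2, iterPoly_diff, map_mul]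
  -- membership of the defects in two-sided ideals containing `c ^ d`
  have hmemI : ∀ (I : Ideal A), (∀ x ∈ I, ∀ b : A, x * b ∈ I) →
      ∀ d, c ^ d ∈ I → ∀ m, d ≤ 2 ^ m → u m * u m - u m ∈ I := by
    intro I htwo d hd m hm
    obtain ⟨z, hz⟩ := hsq m
    have hcp : c ^ (2 ^ m) ∈ I := by
      have : c ^ (2 ^ m) = c ^ (2 ^ m - d) * c ^ d := by
        rw [← pow_add, Nat.sub_add_cancel hm]
      rw [this]
      exact Ideal.mul_mem_left _ _ hd
    rw [hz]
    exact htwo _ hcp z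
  have hdiffI : ∀ (I : Ideal A), (∀ x ∈ I, ∀ b : A, x * b ∈ I) →
      ∀ d, c ^ d ∈ I → ∀ m, d ≤ 2 ^ m → u (m + 1) - u m ∈ I := by
    intro I htwo d hd m hm
    obtain ⟨z, hz⟩ := hdiff m
    rw [hz]
    exact htwo _ (hmemI I htwo d hd m hm) z
  have htail : ∀ (I : Ideal A), (∀ x ∈ I, ∀ b : A, x * b ∈ I) →
      ∀ d, c ^ d ∈ I → d ≤ 2 ^ d → ∀ m, d ≤ 2 ^ m → ∀ l, u (m + l) - u m ∈ I := by
    intro I htwo d hd _ m hm l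
    induction l with
    | zero => simpa using I.zero_mem
    | succ l ih =>
      have h1 : u (m + l + 1) - u (m + l) ∈ I :=
        hdiffI I htwo d hd (m + l) (hm.trans (Nat.pow_le_pow_right (by norm_num) (by omega)))
      have : u (m + (l + 1)) - u m = (u (m + l + 1) - u (m + l)) + (u (m + l) - u m) := by
        rw [show m + (l + 1) = m + l + 1 from rfl]; abel
      rw [this]
      exact I.add_mem h1 ih
  -- the iterates stay congruent to `a` mod `J`
  have hJm : ∀ m, u m - a ∈ openJacobson A := by
    intro m
    induction m with
    | zero => rw [hu0]; simpa using (openJacobson A).zero_mem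
    | succ m ih =>
      obtain ⟨z, hz⟩ := hdiff m
      obtain ⟨z', hz'⟩ := hsq m
      have h1 : u (m + 1) - u m ∈ openJacobson A := by
        rw [hz, hz']
        refine hJtwo _ (hJtwo _ ?_ z') z
        have : c ^ (2 ^ m) = c ^ (2 ^ m - 1) * c ^ 1 := by
          rw [← pow_add, Nat.sub_add_cancel (Nat.one_le_two_pow)]
        rw [this, pow_one]
        exact Ideal.mul_mem_left _ _ ha
      have : u (m + 1) - a = (u (m + 1) - u m) + (u m - a) := by abel
      rw [this]
      exact (openJacobson A).add_mem h1 ih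
  -- Cauchy sequence
  have hcauchy : CauchySeq u := by
    rw [cauchySeq_iff]
    intro V hV
    rw [uniformity_eq_comap_nhds_zero A] at hV
    obtain ⟨W, hW, hWV⟩ := hV
    obtain ⟨I, htwo, hIopen, hIfd, hIW⟩ := hA.basis W hW
    obtain ⟨d, hd⟩ := aux_topnilp c ha I htwo hIopen hIfd
    have hd2 : d ≤ 2 ^ d := (Nat.lt_two_pow_self (n := d)).le
    refine ⟨d, fun m hm l hl => ?_⟩
    apply hWV
    show u l - u m ∈ W
    apply hIW
    have h1 : u m - u d ∈ I := by
      have := htail I htwo d hd hd2 d hd2 (m - d)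
      rwa [Nat.add_sub_cancel' hm] at this
    have h2 : u l - u d ∈ I := by
      have := htail I htwo d hd hd2 d hd2 (l - d)
      rwa [Nat.add_sub_cancel' hl] at this
    have : u l - u m = (u l - u d) - (u m - u d) := by abel
    rw [this]
    exact I.sub_mem h2 h1
  obtain ⟨e, he⟩ := cauchySeq_tendsto_of_complete hcauchy
  -- defects tend to zero
  have hsqz : Filter.Tendsto (fun m => u m * u m - u m) Filter.atTop (nhds 0) := by
    rw [Filter.tendsto_def]
    intro s hsnhds
    obtain ⟨I, htwo, hIopen, hIfd, hIs⟩ := hA.basis s hsnhds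
    obtain ⟨d, hd⟩ := aux_topnilp c ha I htwo hIopen hIfd
    rw [Filter.mem_atTop_sets]
    refine ⟨d, fun m hm => ?_⟩
    exact hIs (hmemI I htwo d hd m (hm.trans (Nat.lt_two_pow_self (n := m)).le))
  have hsql : Filter.Tendsto (fun m => u m * u m - u m) Filter.atTop (nhds (e * e - e)) :=
    (he.mul he).sub he
  have heid : IsIdempotentElem e := by
    have h0 : e * e - e = 0 := tendsto_nhds_unique hsql hsqz
    exact sub_eq_zero.mp h0
  -- limit congruent to `a` mod `J`
  have heJ : e - a ∈ openJacobson A := by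
    have h1 : Filter.Tendsto (fun m => u m - a) Filter.atTop (nhds (e - a)) :=
      he.sub tendsto_const_nhds
    exact (aux_J_closed (A := A)).mem_of_tendsto h1 (Filter.Eventually.of_forall hJm)
  -- compatibility with `f`
  have hfu : ∀ m, f * u m = u m ∧ u m * f = u m := by
    intro m
    induction m with
    | zero => rw [hu0]; exact ⟨hfa, haf⟩
    | succ m ih =>
      obtain ⟨h1, h2⟩ := ih
      have hexp : u (m + 1) = u m * u m + u m * u m + u m * u m
          - (u m * (u m * u m) + u m * (u m * u m)) := by
        show Polynomial.aeval a (iterPoly k (m + 1)) = _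
        rw [iterPoly_cube]
        simp only [map_sub, map_add, map_mul]
        rfl
      constructor
      · rw [hexp]
        simp only [mul_sub, mul_add, ← mul_assoc, h1]
      · rw [hexp]
        simp only [sub_mul, add_mul, mul_assoc, h2]
  have hfe : f * e = e := by
    have h1 : Filter.Tendsto (fun m => f * u m) Filter.atTop (nhds (f * e)) :=
      tendsto_const_nhds.mul he
    have h2 : Filter.Tendsto (fun m => f * u m) Filter.atTop (nhds e) :=
      he.congr fun m => ((hfu m).1).symm
    exact tendsto_nhds_unique h1 h2
  have hef : e * f = e := by
    have h1 : Filter.Tendsto (fun m => u m * f) Filter.atTop (nhds (e * f)) :=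
      he.mul tendsto_const_nhds
    have h2 : Filter.Tendsto (fun m => u m * f) Filter.atTop (nhds e) :=
      he.congr fun m => ((hfu m).2).symm
    exact tendsto_nhds_unique h1 h2
  exact ⟨e, heid, heJ, hfe, hef⟩

end Lift

section PiHelpers

variable {k : Type} [Field k] {n : ℕ}

private lemma aux_pi_cases {v : Fin n → k} (hv : IsIdempotentElem v) (j : Fin n) :
    v j = 0 ∨ v j = 1 := by
  have h : v j * v j = v j := congr_fun hv j
  have h0 : v j * (v j - 1) = 0 := by rw [mul_sub, mul_one, h, sub_self]
  rcases mul_eq_zero.mp h0 with h1 | h1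
  · exact Or.inl h1
  · exact Or.inr (sub_eq_zero.mp h1)

private lemma aux_single_idem (i : Fin n) :
    IsIdempotentElem (Pi.single i 1 : Fin n → k) := by
  show (Pi.single i 1 : Fin n → k) * Pi.single i 1 = Pi.single i 1
  funext j
  by_cases h : j = i
  · subst h; simp
  · simp [Pi.single_eq_of_ne h]

private lemma aux_single_orth {i j : Fin n} (h : i ≠ j) :
    (Pi.single i 1 : Fin n → k) * Pi.single j 1 = 0 := by
  funext l
  by_cases hl : l = i
  · subst hl; simp [Pi.single_eq_of_ne h]
  · simp [Pi.single_eq_of_ne hl]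

private lemma aux_single_inj {i j : Fin n}
    (h : (Pi.single i 1 : Fin n → k) = Pi.single j 1) : i = j := by
  by_contra hne
  have := congr_fun h i
  rw [Pi.single_eq_same, Pi.single_eq_of_ne hne] at this
  exact one_ne_zero this

/-- If two orthogonal idempotents of `kⁿ` sum to a coordinate idempotent, one of them
vanishes. -/
private lemma aux_single_decomp (i : Fin n) (v w : Fin n → k) (hv : IsIdempotentElem v)
    (hw : IsIdempotentElem w) (hvw : v * w = 0)
    (hsum : v + w = (Pi.single i 1 : Fin n → k)) :
    v = 0 ∨ w = 0 := by
  have hco : ∀ j, j ≠ i → v j = 0 ∧ w j = 0 := by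
    intro j hj
    have hs : v j + w j = 0 := by
      have := congr_fun hsum j
      rwa [Pi.add_apply, Pi.single_eq_of_ne hj] at this
    have hp : v j * w j = 0 := congr_fun hvw j
    rcases aux_pi_cases hv j with h | h <;> rcases aux_pi_cases hw j with h' | h'
    · exact ⟨h, h'⟩
    · rw [h, h'] at hs; norm_num at hs
    · rw [h, h'] at hs; norm_num at hs
    · rw [h, h'] at hp; norm_num at hp
  have hi : v i + w i = 1 := by
    have := congr_fun hsum i
    rwa [Pi.add_apply, Pi.single_eq_same] at this
  have hpi : v i * w i = 0 := congr_fun hvw i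
  rcases aux_pi_cases hv i with h | h
  · left; funext j
    by_cases hj : j = i
    · rw [hj, h]; rfl
    · rw [(hco j hj).1]; rfl
  · right; funext j
    by_cases hj : j = i
    · have hwi : w i = 0 := by
        have := hpi; rw [h, one_mul] at this; exact this
      rw [hj, hwi]; rfl
    · rw [(hco j hj).2]; rfl

private lemma aux_smul_single (x : Fin n → k) (i : Fin n) :
    x i • (Pi.single i 1 : Fin n → k) = Pi.single i (x i) := by
  funext j
  by_cases h : j = i
  · subst h; simp
  · simp [Pi.single_eq_of_ne h]

private lemma aux_sum_single : (∑ i : Fin n, (Pi.single i 1 : Fin n → k)) = 1 := by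
  have h := Finset.univ_sum_single (1 : Fin n → k)
  simpa using h

end PiHelpers

/-- Let `A` be a pointed pseudocompact `k`-algebra with `A/J²(A)` finite
dimensional.  Identify `A/J(A)` with `kⁿ = (Fin n → k)` via a surjective algebra
homomorphism `φ : A → kⁿ` with kernel `J(A)`; the unique complete set `P` of primitive
orthogonal idempotents of `kⁿ` consists of the coordinate idempotents `Pi.single i 1`.
A splitting of the projection `A → A/J(A)` is an algebra homomorphism
`σ : kⁿ → A` with `φ ∘ σ = id`.  Then the map `Ω : σ ↦ σ(P)` is a bijection from the set
of splittings onto the set of complete sets of primitive orthogonal idempotents of `A`: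
it takes values in complete sets, is injective, and every complete set arises. -/
theorem splittings_biject_with_complete_orth_sets
    (k : Type) [Field k] [PerfectField k]
    (A : Type) [DecidableEq A] [Ring A] [Algebra k A] [UniformSpace A] [IsUniformAddGroup A] [IsTopologicalRing A]
    (hA : IsPseudocompactAlgebra k A) (hAp : IsPointed k A)
    (hfd : FiniteDimensional k (A ⧸ Jpow k A 2))
    (n : ℕ) (φ : A →ₐ[k] (Fin n → k)) (hs : Function.Surjective φ)
    (hker : RingHom.ker φ = openJacobson A) :
    (∀ σ : (Fin n → k) →ₐ[k] A, φ.comp σ = AlgHom.id k (Fin n → k) →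
        IsCompleteOrthSet (Finset.image (fun i => σ (Pi.single i 1)) Finset.univ)) ∧
    (∀ σ τ : (Fin n → k) →ₐ[k] A,
        φ.comp σ = AlgHom.id k (Fin n → k) → φ.comp τ = AlgHom.id k (Fin n → k) →
        Finset.image (fun i => σ (Pi.single i 1)) Finset.univ
          = Finset.image (fun i => τ (Pi.single i 1)) Finset.univ → σ = τ) ∧
    (∀ E : Finset A, IsCompleteOrthSet E → ∃ σ : (Fin n → k) →ₐ[k] A,
        φ.comp σ = AlgHom.id k (Fin n → k) ∧
        Finset.image (fun i => σ (Pi.single i 1)) Finset.univ = E) := by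
  classical
  -- `J` is a two-sided ideal, being the kernel of `φ`
  have hJtwo : ∀ x ∈ openJacobson A, ∀ b : A, x * b ∈ openJacobson A := by
    intro x hx b
    rw [← hker] at hx ⊢
    rw [RingHom.mem_ker] at hx ⊢
    rw [map_mul, hx, zero_mul]
  -- idempotents in the kernel of `φ` are zero
  have hidem0 : ∀ g : A, IsIdempotentElem g → φ g = 0 → g = 0 := by
    intro g hg hg0
    exact aux_idem_zero hA g hg (hker ▸ RingHom.mem_ker.mpr hg0)
  refine ⟨?_, ?_, ?_⟩
  · -- Part 1: the image of a splitting is a complete orthogonal set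
    intro σ hσ
    have hφσ : ∀ x, φ (σ x) = x := fun x => AlgHom.congr_fun hσ x
    have hinj : ∀ i j : Fin n, σ (Pi.single i 1) = σ (Pi.single j 1) → i = j := by
      intro i j hij
      apply aux_single_inj (k := k)
      rw [← hφσ (Pi.single i 1), ← hφσ (Pi.single j 1), hij]
    refine ⟨?_, ?_, ?_⟩
    · intro e he
      obtain ⟨i, -, rfl⟩ := Finset.mem_image.mp he
      have hidem : IsIdempotentElem (σ (Pi.single i 1)) := by
        show σ (Pi.single i 1) * σ (Pi.single i 1) = σ (Pi.single i 1)
        rw [← map_mul, aux_single_idem i]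
      refine ⟨⟨hidem, ?_⟩, ?_⟩
      · rintro ⟨g1, g2, hg1, hg2, hg1n, hg2n, h12, -, hsum⟩
        have hv : IsIdempotentElem (φ g1) := by
          show φ g1 * φ g1 = φ g1
          rw [← map_mul, hg1]
        have hw : IsIdempotentElem (φ g2) := by
          show φ g2 * φ g2 = φ g2
          rw [← map_mul, hg2]
        have hvw : φ g1 * φ g2 = 0 := by rw [← map_mul, h12, map_zero]
        have hsum' : φ g1 + φ g2 = Pi.single i 1 := by
          rw [← map_add, ← hsum, hφσ]
        rcases aux_single_decomp i _ _ hv hw hvw hsum' with h | h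
        · exact hg1n (hidem0 g1 hg1 h)
        · exact hg2n (hidem0 g2 hg2 h)
      · intro h0
        have h1 := hφσ (Pi.single i 1)
        rw [h0, map_zero] at h1
        have := congr_fun h1 i
        rw [Pi.single_eq_same] at this
        exact one_ne_zero this.symm
    · intro e he f hf hne
      obtain ⟨i, -, rfl⟩ := Finset.mem_image.mp he
      obtain ⟨j, -, rfl⟩ := Finset.mem_image.mp hf
      have hij : i ≠ j := fun h => hne (by rw [h])
      constructor
      · rw [← map_mul, aux_single_orth hij, map_zero]
      · rw [← map_mul, aux_single_orth (Ne.symm hij), map_zero]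
    · rw [Finset.sum_image (fun x _ y _ h => hinj x y h), ← map_sum, aux_sum_single,
        map_one]
  · -- Part 2: injectivity
    intro σ τ hσ hτ himg
    have hφσ : ∀ x, φ (σ x) = x := fun x => AlgHom.congr_fun hσ x
    have hφτ : ∀ x, φ (τ x) = x := fun x => AlgHom.congr_fun hτ x
    have key : ∀ i, σ (Pi.single i 1) = τ (Pi.single i 1) := by
      intro i
      have hmem : σ (Pi.single i 1)
          ∈ Finset.image (fun i => τ (Pi.single i 1)) Finset.univ := by
        rw [← himg]
        exact Finset.mem_image_of_mem _ (Finset.mem_univ i)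
      obtain ⟨j, -, hj⟩ := Finset.mem_image.mp hmem
      have hsing : (Pi.single j 1 : Fin n → k) = Pi.single i 1 := by
        rw [← hφτ (Pi.single j 1), ← hφσ (Pi.single i 1), hj]
      rw [← hj, aux_single_inj hsing]
    refine AlgHom.ext fun x => ?_
    have hx : x = ∑ i, Pi.single i (x i) := (Finset.univ_sum_single x).symm
    rw [hx, map_sum, map_sum]
    refine Finset.sum_congr rfl fun i _ => ?_
    rw [← aux_smul_single, map_smul, map_smul, key]
  · -- Part 3: surjectivity
    intro E hE
    obtain ⟨hprim, horth, hsum⟩ := hE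
    -- each element of `E` maps to a coordinate idempotent
    have hstepB : ∀ f ∈ E, ∃ i : Fin n, φ f = Pi.single i 1 := by
      intro f hf
      obtain ⟨⟨hfidem, hfprim⟩, hfne⟩ := hprim f hf
      have hφf : φ f ≠ 0 := fun h => hfne (hidem0 f hfidem h)
      have hφfi : IsIdempotentElem (φ f) := by
        show φ f * φ f = φ f
        rw [← map_mul, hfidem]
      obtain ⟨i, hi⟩ : ∃ i, φ f i ≠ 0 := by
        by_contra h
        push_neg at h
        exact hφf (funext h)
      have hi1 : φ f i = 1 := (aux_pi_cases hφfi i).resolve_left hi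
      refine ⟨i, funext fun j => ?_⟩
      by_cases hj : j = i
      · rw [hj, hi1, Pi.single_eq_same]
      · rw [Pi.single_eq_of_ne hj]
        by_contra hj0
        have hj1 : φ f j = 1 := (aux_pi_cases hφfi j).resolve_left hj0
        -- split `f` using an idempotent lifted inside `f A f`
        obtain ⟨b, hb⟩ := hs (Pi.single i 1)
        set a : A := f * (b * f) with ha
        have hφa : φ a = Pi.single i 1 := by
          rw [ha, map_mul, map_mul, hb]
          funext l
          by_cases hl : l = i
          · subst hl
            simp [Pi.mul_apply, hi1]
          · simp [Pi.mul_apply, Pi.single_eq_of_ne hl]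
        have haJ : a * a - a ∈ openJacobson A := by
          rw [← hker, RingHom.mem_ker, map_sub, map_mul, hφa, aux_single_idem i, sub_self]
        have hfa : f * a = a := by rw [ha, ← mul_assoc, hfidem]
        have haf : a * f = a := by
          rw [ha, mul_assoc, mul_assoc, hfidem]
        obtain ⟨e, heidem, heJ, hfe, hef⟩ := aux_lift hA hJtwo a f haJ hfidem hfa haf
        have hφe : φ e = Pi.single i 1 := by
          rw [← hker] at heJ
          have h0 : φ (e - a) = 0 := RingHom.mem_ker.mp heJ
          rw [map_sub, sub_eq_zero] at h0
          rw [h0, hφa]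
        have hge : IsIdempotentElem (f - e) := by
          show (f - e) * (f - e) = f - e
          rw [sub_mul, mul_sub, mul_sub, hfidem, hfe, hef, heidem]
          abel
        have hene : e ≠ 0 := by
          intro h
          rw [h, map_zero] at hφe
          have := congr_fun hφe i
          rw [Pi.single_eq_same] at this
          exact one_ne_zero this.symm
        have hgne : f - e ≠ 0 := by
          intro h
          rw [sub_eq_zero] at h
          rw [h, hφe, Pi.single_eq_of_ne hj] at hj1
          exact one_ne_zero hj1.symm
        have horth1 : e * (f - e) = 0 := by rw [mul_sub, hef, heidem, sub_self]
        have horth2 : (f - e) * e = 0 := by rw [sub_mul, hfe, heidem, sub_self]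
        exact hfprim ⟨e, f - e, heidem, hge, hene, hgne, horth1, horth2, by abel⟩
    -- uniqueness of the element of `E` above each coordinate idempotent
    have huniq : ∀ i : Fin n, ∀ f ∈ E, ∀ g ∈ E,
        φ f = Pi.single i 1 → φ g = Pi.single i 1 → f = g := by
      intro i f hf g hg hφf hφg
      by_contra hne
      have h0 : f * g = 0 := (horth f hf g hg hne).1
      have h1 : φ f * φ g = 0 := by rw [← map_mul, h0, map_zero]
      rw [hφf, hφg, aux_single_idem i] at h1
      have := congr_fun h1 i
      rw [Pi.single_eq_same] at this
      exact one_ne_zero this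
    -- existence of an element of `E` above each coordinate idempotent
    have hexists : ∀ i : Fin n, ∃ f, f ∈ E ∧ φ f = Pi.single i 1 := by
      intro i
      have h1 : ∑ f ∈ E, φ f = 1 := by rw [← map_sum, hsum, map_one]
      have h2 : ∑ f ∈ E, φ f i = 1 := by
        have := congr_fun h1 i
        rwa [Finset.sum_apply] at this
      by_contra h
      push_neg at h
      have hzero : ∀ f ∈ E, φ f i = 0 := by
        intro f hf
        obtain ⟨j, hjf⟩ := hstepB f hf
        have hne : j ≠ i := fun hji => (h f hf) (by rw [hjf, hji])
        rw [hjf, Pi.single_eq_of_ne (Ne.symm hne)]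
      rw [Finset.sum_congr rfl hzero, Finset.sum_const_zero] at h2
      exact zero_ne_one h2
    choose ρ hρE hρφ using hexists
    have hρinj : Function.Injective ρ := by
      intro i j hij
      apply aux_single_inj (k := k)
      rw [← hρφ i, ← hρφ j, hij]
    have hρimg : Finset.image ρ Finset.univ = E := by
      apply Finset.Subset.antisymm
      · intro x hx
        obtain ⟨i, -, rfl⟩ := Finset.mem_image.mp hx
        exact hρE i
      · intro f hf
        obtain ⟨i, hi⟩ := hstepB f hf
        exact Finset.mem_image.mpr ⟨i, Finset.mem_univ i,
          huniq i (ρ i) (hρE i) f hf (hρφ i) hi⟩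
    have hρidem : ∀ i, ρ i * ρ i = ρ i := fun i => ((hprim _ (hρE i)).1).1
    have hρorth : ∀ i j, i ≠ j → ρ i * ρ j = 0 := fun i j hij =>
      (horth _ (hρE i) _ (hρE j) (fun h => hij (hρinj h))).1
    have hρsum : ∑ i : Fin n, ρ i = 1 := by
      rw [← hρimg, Finset.sum_image (fun x _ y _ h => hρinj h)] at hsum
      exact hsum
    -- construct the splitting
    let σ : (Fin n → k) →ₐ[k] A :=
      { toFun := fun x => ∑ i, x i • ρ i
        map_one' := by simp [hρsum]
        map_mul' := by
          intro x y
          show ∑ i, (x * y) i • ρ i = (∑ i, x i • ρ i) * (∑ j, y j • ρ j)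
          rw [Finset.sum_mul_sum]
          have hterm : ∀ i : Fin n, ∑ j : Fin n, (x i • ρ i) * (y j • ρ j)
              = (x * y) i • ρ i := by
            intro i
            rw [Finset.sum_eq_single i]
            · rw [smul_mul_assoc, mul_smul_comm, smul_smul, hρidem, Pi.mul_apply]
            · intro j _ hj
              rw [smul_mul_assoc, mul_smul_comm, hρorth i j (Ne.symm hj), smul_zero,
                smul_zero]
            · intro h
              exact absurd (Finset.mem_univ i) h
          rw [Finset.sum_congr rfl fun i _ => hterm i]
        map_zero' := by simp
        map_add' := by
          intro x y
          show ∑ i, (x + y) i • ρ i = (∑ i, x i • ρ i) + ∑ i, y i • ρ i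
          rw [← Finset.sum_add_distrib]
          exact Finset.sum_congr rfl fun i _ => by rw [Pi.add_apply, add_smul]
        commutes' := by
          intro r
          show ∑ i, (algebraMap k (Fin n → k) r) i • ρ i = algebraMap k A r
          have h1 : ∀ i : Fin n, (algebraMap k (Fin n → k) r) i = r := fun i => rfl
          simp only [h1]
          rw [← Finset.smul_sum, hρsum, Algebra.algebraMap_eq_smul_one] }
    have hσapp : ∀ x : Fin n → k, σ x = ∑ i, x i • ρ i := fun x => rfl
    have hσsingle : ∀ i : Fin n, σ (Pi.single i 1) = ρ i := by
      intro i
      rw [hσapp]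
      rw [Finset.sum_eq_single i]
      · rw [Pi.single_eq_same, one_smul]
      · intro j _ hj
        rw [Pi.single_eq_of_ne hj, zero_smul]
      · intro h
        exact absurd (Finset.mem_univ i) h
    refine ⟨σ, ?_, ?_⟩
    · refine AlgHom.ext fun x => ?_
      show φ (σ x) = x
      rw [hσapp, map_sum]
      have h1 : ∀ i : Fin n, φ (x i • ρ i) = Pi.single i (x i) := by
        intro i
        rw [map_smul, hρφ, aux_smul_single]
      rw [Finset.sum_congr rfl fun i _ => h1 i, Finset.univ_sum_single]
    · rw [show (fun i : Fin n => σ (Pi.single i 1)) = ρ from funext hσsingle]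
      exact hρimg
end
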